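/- arXiv:1310.7088 — 4 statements merged into one kernel-verified Lean document; each statement's English description precedes it below -/
import Mathlib

section
/- In GL₂(𝔽₃), the normalizer of a non-split Cartan subgroup is a 2-Sylow subgroup of GL₂(𝔽₃), and the normalizer of a split Cartan subgroup is contained in the normalizer of a non-split Cartan subgroup as a subgroup of index 2. -/
open Matrix

/-- A subgroup of `GL₂(𝔽_p)` is absolutely irreducible if its natural two-dimensional
representation over the algebraic closure of `𝔽_p` is irreducible, i.e. the only invariant
subspaces are `⊥` and `⊤`. -/
def IsAbsolutelyIrreducible (p : ℕ) [Fact p.Prime] (G : Subgroup (GL (Fin 2) (ZMod p))) : Prop :=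
  ∀ W : Submodule (AlgebraicClosure (ZMod p)) (Fin 2 → AlgebraicClosure (ZMod p)),
    (∀ g ∈ G, ∀ w ∈ W,
      (((g : GL (Fin 2) (ZMod p)) : Matrix (Fin 2) (Fin 2) (ZMod p)).map
        (algebraMap (ZMod p) (AlgebraicClosure (ZMod p)))).mulVec w ∈ W) →
    W = ⊥ ∨ W = ⊤

/-- `SL₂(𝔽_p)` as a subgroup of `GL₂(𝔽_p)`: the kernel of the determinant. -/
def SL2 (p : ℕ) : Subgroup (GL (Fin 2) (ZMod p)) :=
  (Matrix.GeneralLinearGroup.det : GL (Fin 2) (ZMod p) →* (ZMod p)ˣ).ker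

/-- A split Cartan subgroup of `GL₂(𝔽_p)`: a conjugate of the diagonal torus. -/
def IsSplitCartan (p : ℕ) (C : Subgroup (GL (Fin 2) (ZMod p))) : Prop :=
  ∃ g : GL (Fin 2) (ZMod p), ∀ u : GL (Fin 2) (ZMod p), u ∈ C ↔
    ∃ a b : (ZMod p)ˣ,
      ((g * u * g⁻¹ : GL (Fin 2) (ZMod p)) : Matrix (Fin 2) (Fin 2) (ZMod p)) =
        Matrix.diagonal ![(a : ZMod p), (b : ZMod p)]

/-- A non-split Cartan subgroup of `GL₂(𝔽_p)`: the image of `𝔽_{p²}ˣ` under an embedding of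
rings `𝔽_{p²} → M₂(𝔽_p)`. -/
def IsNonsplitCartan (p : ℕ) [Fact p.Prime] (C : Subgroup (GL (Fin 2) (ZMod p))) : Prop :=
  ∃ f : GaloisField p 2 →+* Matrix (Fin 2) (Fin 2) (ZMod p),
    ∀ u : GL (Fin 2) (ZMod p), u ∈ C ↔
      ∃ x : GaloisField p 2, x ≠ 0 ∧ ((u : Matrix (Fin 2) (Fin 2) (ZMod p)) = f x)

/-- A Cartan subgroup of `GL₂(𝔽_p)` is either a split or a non-split Cartan subgroup. -/
def IsCartan (p : ℕ) [Fact p.Prime] (C : Subgroup (GL (Fin 2) (ZMod p))) : Prop :=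
  IsSplitCartan p C ∨ IsNonsplitCartan p C



namespace GL2Aux

abbrev Mat := Matrix (Fin 2) (Fin 2) (ZMod 3)
abbrev G2 := GL (Fin 2) (ZMod 3)

def minv (x : Mat) : Mat := x.det • x.adjugate
def M0 : Mat := !![1,2;1,1]
def Jm : Mat := !![0,2;1,0]
def S8 : Finset Mat := {!![1,0;0,1], !![1,2;1,1], !![0,1;2,0], !![1,1;2,1], !![2,0;0,2], !![2,1;2,2], !![0,2;1,0], !![2,2;1,2]}
def S9 : Finset Mat := insert !![0,0;0,0] S8
def S16 : Finset Mat := {!![0,1;1,0],!![0,1;2,0],!![0,2;1,0],!![0,2;2,0],!![1,0;0,1],!![1,0;0,2],!![1,1;1,2],!![1,1;2,1],!![1,2;1,1],!![1,2;2,2],!![2,0;0,1],!![2,0;0,2],!![2,1;1,1],!![2,1;2,2],!![2,2;1,2],!![2,2;2,1]}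
def S4 : Finset Mat := {!![1,0;0,1],!![1,0;0,2],!![2,0;0,1],!![2,0;0,2]}
def S8d : Finset Mat := {!![0,1;1,0],!![0,1;2,0],!![0,2;1,0],!![0,2;2,0],!![1,0;0,1],!![1,0;0,2],!![2,0;0,1],!![2,0;0,2]}

section ComputationalFacts
set_option maxRecDepth 100000
set_option maxHeartbeats 2000000
theorem d_inv : ∀ x : Mat, x.det ≠ 0 → x * minv x = 1 ∧ minv x * x = 1 := by decide
theorem dS8det : ∀ m ∈ S8, m.det ≠ 0 := by decide
theorem dS4det : ∀ m ∈ S4, m.det ≠ 0 := by decide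
theorem dS16det : ∀ m ∈ S16, m.det ≠ 0 := by decide
theorem dS8ddet : ∀ m ∈ S8d, m.det ≠ 0 := by decide
theorem dS16card : S16.card = 16 := by decide
theorem dS8dcard : S8d.card = 8 := by decide
theorem dpow : ∀ k, k < 8 → M0 ^ k ∈ S8 := by decide
theorem dpow' : ∀ m ∈ S8, ∃ k ∈ Finset.range 8, M0 ^ k = m := by decide
theorem dM08 : M0 ^ 8 = 1 := by decide
theorem dJ4 : Jm ^ 4 = 1 := by decide
theorem dJq : Jm ^ 2 + 1 = 0 := by decide
theorem dMinv0 : M0 * minv M0 = 1 ∧ minv M0 * M0 = 1 := by decide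
theorem dsub : ∀ m ∈ S8d, m ∈ S16 := by decide
theorem d0S8 : (0 : Mat) ∉ S8 := by decide
theorem dS9nz : ∀ m ∈ S9, m ≠ 0 → m ∈ S8 := by decide
theorem dS9add : ∀ x ∈ S9, ∀ y ∈ S9, x + y ∈ S9 := by decide
theorem dS9smulJ : ∀ a : ZMod 3, ∀ k, k < 4 → a • (Jm ^ k) ∈ S9 := by decide
theorem dS8form : ∀ m ∈ S8, ∃ a b : ZMod 3, m = a • (1 : Mat) + b • Jm := by decide
theorem dS4diag : ∀ a b : ZMod 3, a ≠ 0 → b ≠ 0 → (diagonal ![a,b] : Mat) ∈ S4 := by decide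
theorem dnorm8 : ∀ x : Mat, x.det ≠ 0 → ((∀ m ∈ S8, x * m * minv x ∈ S8) ↔ x ∈ S16) := by decide
theorem dnorm4 : ∀ x : Mat, x.det ≠ 0 → ((∀ m ∈ S4, x * m * minv x ∈ S4) ↔ x ∈ S8d) := by decide
theorem dconj : ∀ x : Mat, (x*x)*(x*x) ≠ 1 → ((x*x)*(x*x))*((x*x)*(x*x)) = 1 →
    ∃ p : Mat, p.det ≠ 0 ∧ (p * x = !![1,2;1,1] * p ∨ p * x = !![1,1;2,1] * p ∨ p * x = !![2,1;2,2] * p ∨ p * x = !![2,2;1,2] * p) := by decide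
theorem dM01 : M0 ^ 1 = !![1,2;1,1] := by decide
theorem dM03 : M0 ^ 3 = !![1,1;2,1] := by decide
theorem dM05 : M0 ^ 5 = !![2,1;2,2] := by decide
theorem dM07 : M0 ^ 7 = !![2,2;1,2] := by decide
end ComputationalFacts

/-! ### Generic unit-level helpers -/

theorem unit_det_ne (g : G2) : ((g : Mat)).det ≠ 0 := by
  have h : IsUnit (g : Mat) := ⟨g, rfl⟩
  exact (Matrix.isUnit_iff_isUnit_det _).mp h |>.ne_zero

theorem mkUnit (m : Mat) (h : m.det ≠ 0) : ∃ u : G2, (u : Mat) = m := by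
  have : IsUnit m := (Matrix.isUnit_iff_isUnit_det m).mpr (isUnit_iff_ne_zero.mpr h)
  exact ⟨this.unit, rfl⟩

theorem val_inv_eq (g : G2) (y : Mat) (h1 : (g : Mat) * y = 1) : ((g⁻¹ : G2) : Mat) = y := by
  calc ((g⁻¹ : G2) : Mat) = ((g⁻¹ : G2) : Mat) * ((g : Mat) * y) := by rw [h1, mul_one]
  _ = (((g⁻¹ * g : G2)) : Mat) * y := by rw [Units.val_mul, mul_assoc]
  _ = y := by rw [inv_mul_cancel, Units.val_one, one_mul]

theorem val_inv_minv (g : G2) : ((g⁻¹ : G2) : Mat) = minv (g : Mat) :=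
  val_inv_eq g _ (d_inv _ (unit_det_ne g)).1

theorem val_conj (g u : G2) : ((g * u * g⁻¹ : G2) : Mat) = (g : Mat) * (u : Mat) * minv (g : Mat) := by
  rw [Units.val_mul, Units.val_mul, val_inv_minv]

/-- A0 = the standard generator of the nonsplit Cartan. -/
def A0 : G2 := ⟨M0, minv M0, dMinv0.1, dMinv0.2⟩
def C0 : Subgroup G2 := Subgroup.zpowers A0

theorem hA0_8 : A0 ^ 8 = 1 := by
  apply Units.ext
  rw [Units.val_pow_eq_pow_val, Units.val_one]
  exact dM08

theorem mem_C0 (u : G2) : u ∈ C0 ↔ (u : Mat) ∈ S8 := by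
  constructor
  · intro hu
    have hu' : u ∈ (Submonoid.powers A0 : Set G2) := by
      rw [powers_eq_zpowers]; exact hu
    obtain ⟨n, hn⟩ := hu'
    rw [← hn]
    show ((A0 ^ n : G2) : Mat) ∈ S8
    rw [pow_eq_pow_mod n hA0_8, Units.val_pow_eq_pow_val]
    exact dpow _ (Nat.mod_lt _ (by norm_num))
  · intro hm
    obtain ⟨k, _, hkm⟩ := dpow' _ hm
    have : u ∈ (Submonoid.powers A0 : Set G2) :=
      ⟨k, Units.ext (by rw [Units.val_pow_eq_pow_val]; exact hkm)⟩
    rwa [powers_eq_zpowers] at this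

/-- generic normalizer characterization -/
theorem norm_char (H : Subgroup G2) (S T : Finset Mat)
    (hmem : ∀ u : G2, u ∈ H ↔ (u : Mat) ∈ S)
    (hdet : ∀ m ∈ S, m.det ≠ 0)
    (hnorm : ∀ x : Mat, x.det ≠ 0 → ((∀ m ∈ S, x * m * minv x ∈ S) ↔ x ∈ T)) :
    ∀ g : G2, g ∈ (Subgroup.normalizer (H : Set G2)) ↔ (g : Mat) ∈ T := by
  intro g
  constructor
  · intro hg
    rw [← hnorm _ (unit_det_ne g)]
    intro m hm
    obtain ⟨u, rfl⟩ := mkUnit m (hdet m hm)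
    have h1 : u ∈ H := (hmem u).2 hm
    have h2 : g * u * g⁻¹ ∈ H := (Subgroup.mem_normalizer_iff.mp hg u).mp h1
    have h3 := (hmem _).1 h2
    rwa [val_conj] at h3
  · intro hg
    have hd := unit_det_ne g
    have hnn := (hnorm _ hd).mpr hg
    have : g ∈ Subgroup.setNormalizer (H : Set G2) := by
      apply Subgroup.mem_normalizer_fintype
      intro n hn
      have h1 : (n : Mat) ∈ S := (hmem n).1 hn
      have h2 := hnn _ h1
      show g * n * g⁻¹ ∈ H
      rw [hmem, val_conj]
      exact h2
    exact this

/-- generic cardinality from a matrix-level characterization -/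
theorem card_char (H : Subgroup G2) (S : Finset Mat)
    (hmem : ∀ u : G2, u ∈ H ↔ (u : Mat) ∈ S)
    (hdet : ∀ m ∈ S, m.det ≠ 0) : Nat.card H = S.card := by
  have e : H ≃ {m : Mat // m ∈ S} := by
    apply Equiv.ofBijective (fun u => (⟨(u.1 : Mat), (hmem u.1).1 u.2⟩ : {m : Mat // m ∈ S}))
    constructor
    · intro a b h
      apply Subtype.ext; apply Units.ext
      exact congrArg Subtype.val h
    · rintro ⟨m, hm⟩
      obtain ⟨u, hu⟩ := mkUnit m (hdet m hm)
      exact ⟨⟨u, (hmem u).2 (hu ▸ hm)⟩, Subtype.ext hu⟩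
  rw [Nat.card_congr e, Nat.card_eq_finsetCard]

theorem mapsymm (φ : G2 ≃* G2) (H : Subgroup G2) :
    Subgroup.map φ.symm.toMonoidHom (Subgroup.map φ.toMonoidHom H) = H := by
  ext x
  rw [Subgroup.mem_map_equiv, Subgroup.mem_map_equiv]
  simp

theorem card_map (φ : G2 ≃* G2) (H : Subgroup G2) :
    Nat.card (Subgroup.map φ.toMonoidHom H) = Nat.card H :=
  (Nat.card_congr (Subgroup.equivMapOfInjective H φ.toMonoidHom φ.injective).toEquiv).symm

theorem norm_map (φ : G2 ≃* G2) (H : Subgroup G2) :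
    (Subgroup.normalizer ((Subgroup.map φ.toMonoidHom H) : Set G2)) = Subgroup.map φ.toMonoidHom (Subgroup.normalizer (H : Set G2)) :=
  (Subgroup.map_equiv_normalizer_eq H φ).symm

theorem relindex_of_cards (H K : Subgroup G2) (h : H ≤ K)
    (hH : Nat.card H = 8) (hK : Nat.card K = 16) : H.relIndex K = 2 := by
  have h1 := Subgroup.card_mul_index (H.subgroupOf K)
  rw [Nat.card_congr (Subgroup.subgroupOfEquivOfLe h).toEquiv, hH, hK] at h1
  have h2 : H.relIndex K = (H.subgroupOf K).index := rfl
  omega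

theorem cardG2 : Nat.card G2 = 48 := by
  rw [Matrix.card_GL_field]
  simp [ZMod.card, Fin.prod_univ_two]

theorem mem_N0 : ∀ g : G2, g ∈ (Subgroup.normalizer (C0 : Set G2)) ↔ (g : Mat) ∈ S16 :=
  norm_char C0 S8 S16 mem_C0 dS8det dnorm8

theorem card_N0 : Nat.card (Subgroup.normalizer (C0 : Set G2)) = 16 := by
  rw [card_char (Subgroup.normalizer (C0 : Set G2)) S16 mem_N0 dS16det, dS16card]

theorem fact48 : (Nat.card G2).factorization 2 = 4 := by
  rw [cardG2]
  rw [show (48 : ℕ) = 2 ^ 4 * 3 from rfl, Nat.factorization_mul (by norm_num) (by norm_num)]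
  rw [Nat.Prime.factorization_pow Nat.prime_two]
  simp [Nat.factorization_eq_zero_of_not_dvd]

theorem zpow_gen (k : ℕ) (hk : k * k % 8 = 1) :
    Subgroup.zpowers (A0 ^ k) = Subgroup.zpowers A0 := by
  apply le_antisymm
  · exact Subgroup.zpowers_le.mpr (Subgroup.pow_mem _ (Subgroup.mem_zpowers A0) k)
  · apply Subgroup.zpowers_le.mpr
    have h1 : (A0 ^ k) ^ k = A0 := by
      rw [← pow_mul, ← Nat.div_add_mod (k * k) 8, hk, pow_add, pow_mul, hA0_8, one_pow, one_mul,
        pow_one]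
    have h2 : (A0 ^ k) ^ k ∈ Subgroup.zpowers (A0 ^ k) :=
      Subgroup.pow_mem _ (Subgroup.mem_zpowers _) k
    rwa [h1] at h2

/-! ### From an abstract nonsplit Cartan to a generator of order 8 -/

theorem nonsplit_gen (C : Subgroup G2) (hC : IsNonsplitCartan 3 C) :
    ∃ A : G2, orderOf A = 8 ∧ C = Subgroup.zpowers A := by
  obtain ⟨f, hf⟩ := hC
  have hfinj : Function.Injective f := f.injective
  -- finiteness of the Galois field
  have h9 : Nat.card (GaloisField 3 2) = 9 := by
    rw [GaloisField.card 3 2 (by norm_num)]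
    norm_num
  have hfin : Finite (GaloisField 3 2) := Nat.finite_of_card_ne_zero (by rw [h9]; norm_num)
  haveI := hfin
  haveI : Fintype (GaloisField 3 2) := Fintype.ofFinite _
  haveI : DecidableEq (GaloisField 3 2) := Classical.decEq _
  obtain ⟨ζ, hζ⟩ := IsCyclic.exists_generator (α := (GaloisField 3 2)ˣ)
  have hord : orderOf ζ = 8 := by
    rw [orderOf_eq_card_of_forall_mem_zpowers hζ, Nat.card_eq_fintype_card,
      Fintype.card_units, ← Nat.card_eq_fintype_card, h9]
  set F : (GaloisField 3 2)ˣ →* G2 := Units.map f.toMonoidHom with hF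
  have hFinj : Function.Injective F := Units.map_injective hfinj
  refine ⟨F ζ, ?_, ?_⟩
  · rw [orderOf_injective F hFinj, hord]
  · ext u
    rw [hf u]
    constructor
    · rintro ⟨x, hx0, hx⟩
      have hxu : IsUnit x := isUnit_iff_ne_zero.mpr hx0
      obtain ⟨k, hk⟩ := hζ hxu.unit
      have hk' : ζ ^ k = hxu.unit := hk
      refine ⟨k, ?_⟩
      show (F ζ) ^ k = u
      rw [← map_zpow F ζ k, hk']
      apply Units.ext
      show f ((hxu.unit : GaloisField 3 2)) = (u : Mat)
      rw [hxu.unit_spec, ← hx]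
    · rintro ⟨k, hk⟩
      have hk' : (F ζ) ^ k = u := hk
      refine ⟨((ζ ^ k : (GaloisField 3 2)ˣ) : GaloisField 3 2), Units.ne_zero _, ?_⟩
      rw [← hk', ← map_zpow F ζ k]
      rfl

/-! ### Conjugating an order 8 element into `C0` -/

theorem conj_to_C0 (A : G2) (hord : orderOf A = 8) :
    ∃ g : G2, Subgroup.map (MulAut.conj g).toMonoidHom (Subgroup.zpowers A) = C0 := by
  have h8 : A ^ 8 = 1 := by rw [← hord]; exact pow_orderOf_eq_one A
  have h4 : A ^ 4 ≠ 1 := pow_ne_one_of_lt_orderOf (by norm_num) (by rw [hord]; norm_num)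
  set B := (A : Mat) with hB
  have hpow4 : ((A ^ 4 : G2) : Mat) = (B * B) * (B * B) := by
    rw [Units.val_pow_eq_pow_val, show (4 : ℕ) = 2 + 2 from rfl, pow_add, pow_two]
  have hB4 : (B * B) * (B * B) ≠ 1 := by
    intro h
    exact h4 (Units.ext (by rw [hpow4, h, Units.val_one]))
  have hB8 : ((B * B) * (B * B)) * ((B * B) * (B * B)) = 1 := by
    have : ((A ^ 8 : G2) : Mat) = ((B * B) * (B * B)) * ((B * B) * (B * B)) := by
      rw [Units.val_pow_eq_pow_val, show (8 : ℕ) = 4 + 4 from rfl, pow_add,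
        show (4 : ℕ) = 2 + 2 from rfl, pow_add, pow_two]
    rw [← this, h8, Units.val_one]
  obtain ⟨p, hp, hcase⟩ := dconj B hB4 hB8
  obtain ⟨g, hg⟩ := mkUnit p hp
  have key : ∃ k : ℕ, k * k % 8 = 1 ∧ g * A * g⁻¹ = A0 ^ k := by
    have conv : ∀ k : ℕ, p * B = (M0 ^ k) * p → g * A * g⁻¹ = A0 ^ k := by
      intro k hk
      have h1 : g * A = A0 ^ k * g := by
        apply Units.ext
        rw [Units.val_mul, Units.val_mul, hg, Units.val_pow_eq_pow_val]
        exact hk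
      rw [h1, mul_inv_cancel_right]
    rcases hcase with h | h | h | h
    · exact ⟨1, by norm_num, conv 1 (by rw [dM01]; exact h)⟩
    · exact ⟨3, by norm_num, conv 3 (by rw [dM03]; exact h)⟩
    · exact ⟨5, by norm_num, conv 5 (by rw [dM05]; exact h)⟩
    · exact ⟨7, by norm_num, conv 7 (by rw [dM07]; exact h)⟩
  obtain ⟨k, hk1, hk2⟩ := key
  refine ⟨g, ?_⟩
  rw [MonoidHom.map_zpowers]
  have : (MulAut.conj g).toMonoidHom A = A0 ^ k := by
    rw [← hk2]; rfl
  rw [this, zpow_gen k hk1]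
  rfl

/-! ### The standard nonsplit Cartan is nonsplit -/

noncomputable section Nonsplit

def qpoly : Polynomial (ZMod 3) := Polynomial.X ^ 2 + Polynomial.C 1

theorem qpoly_monic : qpoly.Monic := Polynomial.monic_X_pow_add_C 1 (by norm_num)

theorem qpoly_natDegree : qpoly.natDegree = 2 := Polynomial.natDegree_X_pow_add_C

theorem qpoly_irr : Irreducible qpoly := by
  rw [Polynomial.irreducible_iff_roots_eq_zero_of_degree_le_three
    (by rw [qpoly_natDegree]) (by rw [qpoly_natDegree]; norm_num)]
  rw [Multiset.eq_zero_iff_forall_notMem]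
  intro a ha
  have ha0 : Polynomial.IsRoot qpoly a := by
    exact (Polynomial.mem_roots qpoly_monic.ne_zero).mp ha
  rw [Polynomial.IsRoot, qpoly] at ha0
  simp only [Polynomial.eval_add, Polynomial.eval_pow, Polynomial.eval_X,
    Polynomial.eval_C] at ha0
  have hall : ∀ b : ZMod 3, b ^ 2 + 1 ≠ 0 := by decide
  exact hall a ha0

instance : Fact (Irreducible qpoly) := ⟨qpoly_irr⟩

abbrev K2 := AdjoinRoot qpoly

theorem cardK2 : Nat.card K2 = 9 := by
  rw [Nat.card_congr
    (AdjoinRoot.powerBasis (K := ZMod 3) (f := qpoly) qpoly_monic.ne_zero).basis.equivFun.toEquiv]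
  rw [show (AdjoinRoot.powerBasis (K := ZMod 3) (f := qpoly) qpoly_monic.ne_zero).dim = 2 by
    rw [AdjoinRoot.powerBasis_dim, qpoly_natDegree]]
  simp [Nat.card_eq_fintype_card]

theorem hJaeval : Polynomial.aeval Jm qpoly = 0 := by
  rw [qpoly]
  simp only [map_add, map_pow, Polynomial.aeval_X, Polynomial.aeval_C, _root_.map_one]
  exact dJq

def aevalJ : Polynomial (ZMod 3) →+* Mat := (Polynomial.aeval Jm).toRingHom

theorem aevalJ_vanish : ∀ p ∈ Ideal.span {qpoly}, aevalJ p = 0 := by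
  intro p hp
  obtain ⟨c, rfl⟩ := Ideal.mem_span_singleton.mp hp
  rw [_root_.map_mul]
  show (Polynomial.aeval Jm) qpoly * _ = 0
  rw [hJaeval, zero_mul]

def Lhom : K2 →+* Mat := Ideal.Quotient.lift (Ideal.span {qpoly}) aevalJ aevalJ_vanish

theorem Lhom_mk (P : Polynomial (ZMod 3)) :
    Lhom (AdjoinRoot.mk qpoly P) = Polynomial.aeval Jm P := rfl

theorem Lrange : ∀ y : K2, Lhom y ∈ S9 := by
  intro y
  obtain ⟨P, rfl⟩ := AdjoinRoot.mk_surjective y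
  rw [Lhom_mk]
  induction P using Polynomial.induction_on' with
  | add p q hp hq => rw [map_add]; exact dS9add _ hp _ hq
  | monomial n a =>
    rw [Polynomial.aeval_monomial, ← Algebra.smul_def]
    rw [pow_eq_pow_mod n dJ4]
    exact dS9smulJ a _ (Nat.mod_lt _ (by norm_num))

theorem nonsplit_C0 : IsNonsplitCartan 3 C0 := by
  have h9 : Nat.card K2 = 3 ^ 2 := by rw [cardK2]; norm_num
  have e : K2 ≃ₐ[ZMod 3] GaloisField 3 2 := GaloisField.algEquivGaloisField 3 2 h9
  refine ⟨Lhom.comp e.symm.toRingEquiv.toRingHom, fun u => ?_⟩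
  rw [mem_C0]
  constructor
  · intro hu
    obtain ⟨a, b, hab⟩ := dS8form _ hu
    set y : K2 := AdjoinRoot.mk qpoly (Polynomial.C a + Polynomial.C b * Polynomial.X) with hy
    have hLy : Lhom y = (u : Mat) := by
      rw [hy, Lhom_mk]
      rw [map_add, _root_.map_mul, Polynomial.aeval_C, Polynomial.aeval_C, Polynomial.aeval_X]
      rw [Algebra.algebraMap_eq_smul_one, Algebra.algebraMap_eq_smul_one, smul_mul_assoc,
        one_mul, ← hab]
    refine ⟨e y, ?_, ?_⟩
    · intro h0
      have hy0 : y = 0 := by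
        have := congrArg e.symm h0
        rwa [AlgEquiv.symm_apply_apply, map_zero] at this
      rw [hy0, map_zero] at hLy
      rw [← hLy] at hu
      exact d0S8 hu
    · show (u : Mat) = Lhom (e.symm.toRingEquiv.toRingHom (e y))
      show (u : Mat) = Lhom (e.symm (e y))
      rw [AlgEquiv.symm_apply_apply, hLy]
  · rintro ⟨x, hx0, hx⟩
    have h1 : (u : Mat) = Lhom (e.symm x) := hx
    have h2 : Lhom (e.symm x) ∈ S9 := Lrange _
    rw [← h1] at h2
    apply dS9nz _ h2
    intro h0
    have := unit_det_ne u
    rw [h0] at this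
    simp at this

end Nonsplit

/-! ### Conjugation ring hom -/

def conjRingHom (g : G2) : Mat →+* Mat where
  toFun m := ((g⁻¹ : G2) : Mat) * m * (g : Mat)
  map_one' := by
    show ((g⁻¹ : G2) : Mat) * 1 * (g : Mat) = 1
    rw [mul_one, ← Units.val_mul, inv_mul_cancel, Units.val_one]
  map_mul' m n := by
    simp only [mul_assoc, Units.mul_inv_cancel_left]
  map_zero' := by simp
  map_add' m n := by simp [mul_add, add_mul]

theorem conj_val_iff (g u : G2) (m : Mat) :
    ((g * u * g⁻¹ : G2) : Mat) = m ↔ (u : Mat) = conjRingHom g m := by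
  show _ ↔ (u : Mat) = ((g⁻¹ : G2) : Mat) * m * (g : Mat)
  constructor
  · intro h
    rw [← h]
    simp only [Units.val_mul, mul_assoc, Units.inv_mul_cancel_left]
    rw [← Units.val_mul, inv_mul_cancel, Units.val_one, mul_one]
  · intro h
    simp only [Units.val_mul, h, mul_assoc, Units.mul_inv_cancel_left]
    rw [← Units.val_mul, mul_inv_cancel, Units.val_one, mul_one]

/-! ### Main theorem -/

theorem main :
    (∀ C : Subgroup G2, IsNonsplitCartan 3 C →
      ∃ S : Sylow 2 G2, (S : Subgroup G2) = (Subgroup.normalizer (C : Set G2))) ∧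
    (∀ C : Subgroup G2, IsSplitCartan 3 C →
      ∃ C' : Subgroup G2, IsNonsplitCartan 3 C' ∧
        (Subgroup.normalizer (C : Set G2)) ≤ (Subgroup.normalizer (C' : Set G2)) ∧ (Subgroup.normalizer (C : Set G2)).relIndex (Subgroup.normalizer (C' : Set G2)) = 2) := by
  haveI : Fact (Nat.Prime 2) := ⟨Nat.prime_two⟩
  constructor
  · -- nonsplit part
    intro C hC
    obtain ⟨A, hord, rfl⟩ := nonsplit_gen C hC
    obtain ⟨g, hmap⟩ := conj_to_C0 A hord
    set φ := MulAut.conj g with hφ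
    have hnorm : (Subgroup.normalizer ((Subgroup.zpowers A) : Set G2)) =
        Subgroup.map φ.symm.toMonoidHom (Subgroup.normalizer (C0 : Set G2)) := by
      rw [Subgroup.map_equiv_normalizer_eq C0 φ.symm, ← hmap, mapsymm]
    have hcard : Nat.card (Subgroup.normalizer ((Subgroup.zpowers A) : Set G2)) = 16 := by
      rw [hnorm, card_map, card_N0]
    refine ⟨Sylow.ofCard (Subgroup.normalizer ((Subgroup.zpowers A) : Set G2)) ?_, rfl⟩
    rw [hcard, fact48]
    norm_num
  · -- split part
    intro C hC
    obtain ⟨g, hg⟩ := hC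
    set φ := MulAut.conj g with hφ
    set D := Subgroup.map φ.toMonoidHom C with hD
    have mem_D : ∀ u : G2, u ∈ D ↔ (u : Mat) ∈ S4 := by
      intro u
      rw [hD, Subgroup.mem_map_equiv, hg]
      have harr : g * ((MulAut.conj g).symm u) * g⁻¹ = u := by
        rw [MulAut.conj_symm_apply]
        group
      rw [harr]
      constructor
      · rintro ⟨a, b, hab⟩
        rw [hab]
        exact dS4diag _ _ (Units.ne_zero a) (Units.ne_zero b)
      · intro hu
        simp only [S4, Finset.mem_insert, Finset.mem_singleton] at hu
        rcases hu with h | h | h | h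
        · exact ⟨1, 1, by rw [h]; decide⟩
        · exact ⟨1, -1, by rw [h]; decide⟩
        · exact ⟨-1, 1, by rw [h]; decide⟩
        · exact ⟨-1, -1, by rw [h]; decide⟩
    have mem_ND : ∀ u : G2, u ∈ (Subgroup.normalizer (D : Set G2)) ↔ (u : Mat) ∈ S8d :=
      norm_char D S4 S8d mem_D dS4det dnorm4
    have hDlN0 : (Subgroup.normalizer (D : Set G2)) ≤ (Subgroup.normalizer (C0 : Set G2)) := fun u hu =>
      (mem_N0 u).2 (dsub _ ((mem_ND u).1 hu))
    have hcardND : Nat.card (Subgroup.normalizer (D : Set G2)) = 8 := by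
      rw [card_char (Subgroup.normalizer (D : Set G2)) S8d mem_ND dS8ddet, dS8dcard]
    -- transport along φ.symm
    refine ⟨Subgroup.map φ.symm.toMonoidHom C0, ?_, ?_, ?_⟩
    · -- nonsplit Cartan
      obtain ⟨f0, hf0⟩ := nonsplit_C0
      refine ⟨(conjRingHom g).comp f0, fun u => ?_⟩
      rw [Subgroup.mem_map_equiv]
      have : φ.symm.symm u = φ u := rfl
      rw [this, hf0]
      have hval : ((φ u : G2) : Mat) = ((g * u * g⁻¹ : G2) : Mat) := rfl
      constructor
      · rintro ⟨x, hx0, hx⟩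
        exact ⟨x, hx0, (conj_val_iff g u (f0 x)).mp (by rw [← hval, ← hx])⟩
      · rintro ⟨x, hx0, hx⟩
        exact ⟨x, hx0, by rw [hval]; exact (conj_val_iff g u (f0 x)).mpr hx⟩
    · -- normalizer inclusion
      have hCnorm : (Subgroup.normalizer (C : Set G2)) = Subgroup.map φ.symm.toMonoidHom (Subgroup.normalizer (D : Set G2)) := by
        rw [Subgroup.map_equiv_normalizer_eq D φ.symm, hD, mapsymm]
      rw [hCnorm, ← Subgroup.map_equiv_normalizer_eq C0 φ.symm]
      exact Subgroup.map_mono hDlN0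
    · -- relindex
      have hCnorm : (Subgroup.normalizer (C : Set G2)) = Subgroup.map φ.symm.toMonoidHom (Subgroup.normalizer (D : Set G2)) := by
        rw [Subgroup.map_equiv_normalizer_eq D φ.symm, hD, mapsymm]
      have hC'norm : (Subgroup.normalizer ((Subgroup.map φ.symm.toMonoidHom C0) : Set G2)) =
          Subgroup.map φ.symm.toMonoidHom (Subgroup.normalizer (C0 : Set G2)) :=
        (Subgroup.map_equiv_normalizer_eq C0 φ.symm).symm
      rw [hCnorm, hC'norm]
      apply relindex_of_cards
      · exact Subgroup.map_mono hDlN0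
      · rw [card_map, hcardND]
      · rw [card_map, card_N0]

end GL2Aux

/-- In `GL₂(𝔽₃)`, the normalizer of a non-split Cartan subgroup is a 2-Sylow subgroup of
`GL₂(𝔽₃)`, and the normalizer of a split Cartan subgroup is contained in the normalizer of some
non-split Cartan subgroup as a subgroup of index 2. -/
theorem GL2_ZMod3_cartan_normalizers :
    (∀ C : Subgroup (GL (Fin 2) (ZMod 3)), IsNonsplitCartan 3 C →
      ∃ S : Sylow 2 (GL (Fin 2) (ZMod 3)), (S : Subgroup (GL (Fin 2) (ZMod 3))) = Subgroup.normalizer ((C : Subgroup (GL (Fin 2) (ZMod 3))) : Set (GL (Fin 2) (ZMod 3)))) ∧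
    (∀ C : Subgroup (GL (Fin 2) (ZMod 3)), IsSplitCartan 3 C →
      ∃ C' : Subgroup (GL (Fin 2) (ZMod 3)), IsNonsplitCartan 3 C' ∧
        Subgroup.normalizer ((C : Subgroup (GL (Fin 2) (ZMod 3))) : Set (GL (Fin 2) (ZMod 3))) ≤ Subgroup.normalizer ((C' : Subgroup (GL (Fin 2) (ZMod 3))) : Set (GL (Fin 2) (ZMod 3))) ∧
          (Subgroup.normalizer ((C : Subgroup (GL (Fin 2) (ZMod 3))) : Set (GL (Fin 2) (ZMod 3)))).relIndex (Subgroup.normalizer ((C' : Subgroup (GL (Fin 2) (ZMod 3))) : Set (GL (Fin 2) (ZMod 3)))) = 2) := by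
  
  exact GL2Aux.main
end

section
/- The elliptic curve E over ℚ given by the Weierstrass equation y² + xy + y = x³ + x² − 5x + 2 (Cremona label 15A3) has Mordell–Weil group E(ℚ) isomorphic to ℤ/4ℤ × ℤ/2ℤ, with exactly the eight rational points ∞, (3/4, −7/8), (0,−2), (2,−4), (1,−1), (−3,1), (0,1), (2,1). -/
lemma sq8 (x : ℕ) : (x^2 % 8 = 0 ∨ x^2 % 8 = 1 ∨ x^2 % 8 = 4)
    ∧ (x^2 % 8 = 0 ↔ x % 4 = 0) ∧ (x^2 % 8 = 1 ↔ x % 2 = 1) := by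
  have h := Nat.pow_mod x 2 8
  have h8 : x % 8 = 0 ∨ x % 8 = 1 ∨ x % 8 = 2 ∨ x % 8 = 3 ∨ x % 8 = 4 ∨ x % 8 = 5
      ∨ x % 8 = 6 ∨ x % 8 = 7 := by omega
  rcases h8 with h8|h8|h8|h8|h8|h8|h8|h8 <;> rw [h8] at h <;> norm_num at h <;> omega

lemma sq3 (x : ℕ) : (x^2 % 3 = 0 ∨ x^2 % 3 = 1) ∧ (x^2 % 3 = 0 ↔ x % 3 = 0) := by
  have h := Nat.pow_mod x 2 3
  have h3 : x % 3 = 0 ∨ x % 3 = 1 ∨ x % 3 = 2 := by omega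
  rcases h3 with h3|h3|h3 <;> rw [h3] at h <;> norm_num at h <;> omega

lemma coprime_two_of_odd (M : ℤ) (hM : M % 2 = 1) : IsCoprime (2:ℤ) M := by
  rw [Int.isCoprime_iff_gcd_eq_one]
  have h1 : (Int.gcd 2 M : ℤ) ∣ 2 := Int.gcd_dvd_left _ _
  have h2 : (Int.gcd 2 M : ℤ) ∣ M := Int.gcd_dvd_right _ _
  have h3 : Int.gcd 2 M ∣ 2 := by exact_mod_cast h1
  rcases (Nat.dvd_prime Nat.prime_two).mp h3 with h | h
  · exact h
  · rw [h] at h2; exfalso; omega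

lemma caseB_core (M K : ℤ) (a : ℕ) (hM : M % 2 = 1) (hcop : Int.gcd M K = 1) (hK : K ≠ 0)
    (ha : (a:ℤ)^2 = (M^2 - 16*K^2)^2 + (2*M*K)^2) :
    ∃ w z x y : ℕ, w^2 + z^2 = x^2 ∧ w^2 + 16*z^2 = y^2 ∧ Nat.Coprime w z ∧
      w ≠ 0 ∧ z ≠ 0 ∧ x < a := by
  have hMK : IsCoprime M K := Int.isCoprime_iff_gcd_eq_one.mpr hcop
  have hM2 : M^2 % 2 = 1 := Int.odd_iff.mp ((Int.odd_iff.mpr hM).pow)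
  have hK2nn : (0:ℤ) ≤ 16*K^2 := by positivity
  have hXodd : (M^2 - 16*K^2) % 2 = 1 := by omega
  have h2M : IsCoprime (2:ℤ) M := coprime_two_of_odd M hM
  have hn16M : IsCoprime (-16 : ℤ) M := by
    have h16' : IsCoprime ((2:ℤ)^4) M := h2M.pow_left
    have := h16'.neg_left
    norm_num at this
    exact this
  have hX_M : IsCoprime (M^2 - 16*K^2) M := by
    have h16 : IsCoprime (-16 * K^2 : ℤ) M := hn16M.mul_left hMK.symm.pow_left
    have := h16.add_mul_left_left M
    rwa [show -16*K^2 + M*M = M^2 - 16*K^2 by ring] at this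
  have hX_K : IsCoprime (M^2 - 16*K^2) K := by
    have h1 : IsCoprime (M^2) K := hMK.pow_left
    have := h1.add_mul_left_left (-16*K)
    rwa [show M^2 + K*(-16*K) = M^2 - 16*K^2 by ring] at this
  have hX_2 : IsCoprime (M^2 - 16*K^2) (2:ℤ) := (coprime_two_of_odd _ hXodd).symm
  have hXco : Int.gcd (M^2 - 16*K^2) (2*M*K) = 1 := by
    rw [← Int.isCoprime_iff_gcd_eq_one, show (2*M*K : ℤ) = 2*(M*K) by ring]
    exact hX_2.mul_right (hX_M.mul_right hX_K)
  have htriple : PythagoreanTriple (M^2 - 16*K^2) (2*M*K) (a:ℤ) := by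
    show _ * _ + _ * _ = _ * _
    linear_combination -ha
  obtain ⟨c, d, hcd1, hza, hcdcop, -⟩ :=
    PythagoreanTriple.coprime_classification.mp ⟨htriple, hXco⟩
  have hM0 : M ≠ 0 := by omega
  rcases hcd1 with ⟨hX, hcd⟩ | ⟨hX, -⟩
  swap
  · exfalso
    have h2 : (2:ℤ) ∣ M^2 - 16*K^2 := ⟨c*d, by linarith⟩
    omega
  have hcd' : c * d = M * K := by linarith
  have hann : (0:ℤ) ≤ (a:ℤ) := Int.natCast_nonneg a
  rcases hza with hza | hza
  swap
  · exfalso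
    have hc : c = 0 := by nlinarith [sq_nonneg c, sq_nonneg d]
    have hd : d = 0 := by nlinarith [sq_nonneg c, sq_nonneg d]
    rw [hc, hd] at hcd'
    simp at hcd'
    tauto
  -- move to ℕ
  set C := c.natAbs with hCdef
  set D := d.natAbs with hDdef
  set Mn := M.natAbs with hMndef
  set Kn := K.natAbs with hKndef
  have haC : a = C^2 + D^2 := by
    have : (a:ℤ) = (C:ℤ)^2 + (D:ℤ)^2 := by rw [Int.natAbs_sq, Int.natAbs_sq]; exact hza
    exact_mod_cast this
  have hCD : C * D = Mn * Kn := by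
    have h1 : (c*d).natAbs = (M*K).natAbs := by rw [hcd']
    rwa [Int.natAbs_mul, Int.natAbs_mul] at h1
  have hkey : C^2 + 16*Kn^2 = Mn^2 + D^2 := by
    have h2 : (C:ℤ)^2 + 16*(Kn:ℤ)^2 = (Mn:ℤ)^2 + (D:ℤ)^2 := by
      rw [Int.natAbs_sq, Int.natAbs_sq, Int.natAbs_sq, Int.natAbs_sq]
      linarith [hX]
    exact_mod_cast h2
  have hMnodd : Mn % 2 = 1 :=
    Nat.odd_iff.mp (Int.natAbs_odd.mpr (Int.odd_iff.mpr hM))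
  have hcopCD : Nat.Coprime C D := hcdcop
  have hcopMK : Nat.Coprime Mn Kn := hcop
  have hKn0 : Kn ≠ 0 := fun h => hK (Int.natAbs_eq_zero.mp h)
  have hMn0 : Mn ≠ 0 := fun h => hM0 (Int.natAbs_eq_zero.mp h)
  have hC0 : C ≠ 0 := by
    intro h; rw [h] at hCD; simp at hCD; tauto
  have hD0 : D ≠ 0 := by
    intro h; rw [h] at hCD; simp at hCD; tauto
  -- four-way split
  set w := Nat.gcd C Mn with hwdef
  have hw0 : w ≠ 0 := fun h => hC0 (Nat.eq_zero_of_gcd_eq_zero_left h)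
  have hwC : w ∣ C := Nat.gcd_dvd_left _ _
  have hwM : w ∣ Mn := Nat.gcd_dvd_right _ _
  set x := C / w with hxdef
  set y := Mn / w with hydef
  have hC : C = w * x := (Nat.mul_div_cancel' hwC).symm
  have hMn : Mn = w * y := (Nat.mul_div_cancel' hwM).symm
  have hxy : Nat.Coprime x y :=
    Nat.coprime_div_gcd_div_gcd (Nat.pos_of_ne_zero hw0)
  have hxDyK : x * D = y * Kn := by
    have : w * (x * D) = w * (y * Kn) := by
      rw [show w*(x*D) = (w*x)*D by ring, show w*(y*Kn) = (w*y)*Kn by ring, ← hC, ← hMn]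
      exact hCD
    exact Nat.eq_of_mul_eq_mul_left (Nat.pos_of_ne_zero hw0) this
  have hyD : y ∣ D := by
    have h1 : y ∣ x * D := ⟨Kn, hxDyK⟩
    exact (Nat.Coprime.dvd_of_dvd_mul_left (hxy.symm) h1)
  set z := D / y with hzdef
  have hy0 : y ≠ 0 := by
    intro h; rw [h, Nat.mul_zero] at hMn; exact hMn0 hMn
  have hD : D = y * z := (Nat.mul_div_cancel' hyD).symm
  have hKnxz : Kn = x * z := by
    have : y * Kn = y * (x * z) := by
      rw [← hxDyK, hD]; ring
    exact Nat.eq_of_mul_eq_mul_left (Nat.pos_of_ne_zero hy0) this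
  have hx0 : x ≠ 0 := by
    intro h; rw [h, Nat.mul_zero] at hC; exact hC0 hC
  have hz0 : z ≠ 0 := by
    intro h; rw [h, Nat.mul_zero] at hD; exact hD0 hD
  have hwz : Nat.Coprime w z :=
    (hcopCD.coprime_dvd_left hwC).coprime_dvd_right ⟨y, by rw [hD]; ring⟩
  have hwodd : Odd w ∧ Odd y := by
    rw [← Nat.odd_mul, ← hMn]
    exact Nat.odd_iff.mpr hMnodd
  -- main identity
  have hmain : x^2 * (w^2 + 16*z^2) = y^2 * (w^2 + z^2) := by
    zify
    have hkz : ((w*x)^2 + 16*(x*z)^2 : ℤ) = ((w*y)^2 + (y*z)^2 : ℤ) := by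
      exact_mod_cast (hC ▸ hMn ▸ hD ▸ hKnxz ▸ hkey)
    linear_combination hkz
  have hx2 : x^2 ∣ w^2 + z^2 := by
    have h1 : x^2 ∣ y^2 * (w^2+z^2) := ⟨w^2+16*z^2, hmain.symm⟩
    exact (Nat.Coprime.dvd_of_dvd_mul_left (Nat.Coprime.pow 2 2 hxy) h1)
  obtain ⟨s, hs⟩ := hx2
  have hy2 : w^2 + 16*z^2 = y^2 * s := by
    have : x^2 * (w^2+16*z^2) = x^2 * (y^2 * s) := by
      rw [hmain, hs]; ring
    exact Nat.eq_of_mul_eq_mul_left (Nat.pos_of_ne_zero (pow_ne_zero 2 hx0)) this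
  have hs0 : s ≠ 0 := by
    intro h; rw [h, Nat.mul_zero] at hs
    have : w^2 ≠ 0 := pow_ne_zero 2 hw0
    omega
  have hsw : s ∣ 15 * w^2 := by
    have h1 : (15 * w^2 : ℤ) = s * (16 * x^2 - y^2) := by
      have e1 : ((w:ℤ)^2 + z^2) = x^2 * s := by exact_mod_cast hs
      have e2 : ((w:ℤ)^2 + 16*z^2) = y^2 * s := by exact_mod_cast hy2
      linear_combination 16*e1 - e2
    have : (s:ℤ) ∣ (15 * w^2 : ℤ) := ⟨16*x^2 - y^2, h1⟩
    exact_mod_cast this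
  have hsz : s ∣ 15 * z^2 := by
    have h1 : (15 * z^2 : ℤ) = s * (y^2 - x^2) := by
      have e1 : ((w:ℤ)^2 + z^2) = x^2 * s := by exact_mod_cast hs
      have e2 : ((w:ℤ)^2 + 16*z^2) = y^2 * s := by exact_mod_cast hy2
      linear_combination e2 - e1
    have : (s:ℤ) ∣ (15 * z^2 : ℤ) := ⟨y^2 - x^2, h1⟩
    exact_mod_cast this
  have hs15 : s ∣ 15 := by
    have h1 : s ∣ Nat.gcd (15*w^2) (15*z^2) := Nat.dvd_gcd hsw hsz
    rwa [Nat.gcd_mul_left, Nat.Coprime.pow 2 2 hwz, Nat.mul_one] at h1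
  have hsle : s ≤ 15 := Nat.le_of_dvd (by norm_num) hs15
  have hs1 : 1 ≤ s := Nat.pos_of_ne_zero hs0
  -- rule out s = 3, 5, 15 ; s = 1 gives descent
  have hw8 := sq8 w
  have hy8 := sq8 y
  have hwodd8 : w^2 % 8 = 1 := hw8.2.2.mpr (Nat.odd_iff.mp hwodd.1)
  have hyodd8 : y^2 % 8 = 1 := hy8.2.2.mpr (Nat.odd_iff.mp hwodd.2)
  interval_cases s
  · -- s = 1
    refine ⟨w, z, x, y, by omega, by omega, hwz, hw0, hz0, ?_⟩
    have hxC : x ≤ C := Nat.le_of_dvd (Nat.pos_of_ne_zero hC0) ⟨w, by rw [hC]; ring⟩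
    have hCC : C ≤ C^2 := Nat.le_self_pow (by norm_num) C
    have hD1 : D^2 ≠ 0 := pow_ne_zero 2 hD0
    omega
  · omega
  · -- s = 3
    exfalso
    have hm3 : (w^2 + z^2) % 3 = 0 := by omega
    have h3w := (sq3 w); have h3z := (sq3 z)
    have : 3 ∣ w ∧ 3 ∣ z := by
      constructor <;> apply Nat.dvd_of_mod_eq_zero <;> omega
    have := Nat.dvd_gcd this.1 this.2
    rw [hwz] at this
    omega
  · omega
  · -- s = 5
    exfalso
    omega
  · omega
  · omega
  · omega
  · omega
  · omega
  · omega
  · omega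
  · omega
  · omega
  · -- s = 15
    exfalso
    have hm3 : (w^2 + z^2) % 3 = 0 := by omega
    have h3w := (sq3 w); have h3z := (sq3 z)
    have : 3 ∣ w ∧ 3 ∣ z := by
      constructor <;> apply Nat.dvd_of_mod_eq_zero <;> omega
    have := Nat.dvd_gcd this.1 this.2
    rw [hwz] at this
    omega

lemma caseB_sub (a q : ℕ) (E Od : ℤ) (hOd : Od % 2 = 1) (hcop : Int.gcd Od E = 1)
    (hq0 : q ≠ 0) (hqe : q % 2 = 0) (hEO : E.natAbs * Od.natAbs = 2*q)
    (ha : (a:ℤ)^2 = (E^2 - Od^2)^2 + (q:ℤ)^2) :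
    ∃ w z x y : ℕ, w^2 + z^2 = x^2 ∧ w^2 + 16*z^2 = y^2 ∧ Nat.Coprime w z ∧
      w ≠ 0 ∧ z ≠ 0 ∧ x < a := by
  have hOdodd : Odd Od.natAbs := Int.natAbs_odd.mpr (Int.odd_iff.mpr hOd)
  have hcop2 : Nat.Coprime 2 Od.natAbs :=
    (Nat.Prime.coprime_iff_not_dvd Nat.prime_two).mpr (by
      intro h; have := Nat.odd_iff.mp hOdodd; omega)
  have hcop4 : Nat.Coprime 4 Od.natAbs := by
    have := Nat.Coprime.pow_left 2 hcop2
    norm_num at this; exact this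
  have h4E : 4 ∣ E.natAbs := by
    have h1 : 4 ∣ E.natAbs * Od.natAbs := by omega
    exact hcop4.dvd_of_dvd_mul_right h1
  have h4EZ : (4:ℤ) ∣ E := by
    have : ((4:ℤ)).natAbs ∣ E.natAbs := by norm_num [h4E]
    exact Int.natAbs_dvd_natAbs.mp this
  obtain ⟨K, hE⟩ := h4EZ
  have hKabs : E.natAbs = 4 * K.natAbs := by
    rw [hE, Int.natAbs_mul]; norm_num
  have hq : q = 2 * (K.natAbs * Od.natAbs) := by
    have h := hEO
    rw [hKabs, Nat.mul_assoc] at h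
    omega
  have hq2 : (q:ℤ)^2 = 4 * K^2 * Od^2 := by
    have h1 : (q:ℤ) = 2 * ((K.natAbs:ℤ) * (Od.natAbs:ℤ)) := by exact_mod_cast hq
    calc (q:ℤ)^2 = 4*((K.natAbs:ℤ))^2*((Od.natAbs:ℤ))^2 := by rw [h1]; ring
    _ = 4*K^2*Od^2 := by rw [Int.natAbs_sq, Int.natAbs_sq]
  have hK0 : K ≠ 0 := by
    intro hKz; rw [hKz] at hq; simp at hq; exact hq0 hq
  have hcopOK : Int.gcd Od K = 1 := by
    have hKd : K.natAbs ∣ E.natAbs := ⟨4, by omega⟩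
    exact Nat.Coprime.coprime_dvd_right hKd hcop
  have ha2 : (a:ℤ)^2 = (Od^2 - 16*K^2)^2 + (2*Od*K)^2 := by
    rw [hE] at ha
    linear_combination ha + hq2
  exact caseB_core Od K a hOd hcopOK hK0 ha2

theorem no_concordant : ∀ a : ℕ, ∀ p q b : ℕ, Nat.Coprime p q → p ≠ 0 → q ≠ 0 →
    p^2 + q^2 = a^2 → p^2 + 16*q^2 = b^2 → False := by
  intro a
  induction a using Nat.strong_induction_on with
  | _ a IH =>
  intro p q b hcop hp0 hq0 ha hb
  have hp8 := sq8 p; have hq8 := sq8 q; have ha8 := sq8 a; have hb8 := sq8 b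
  have hnotbotheven : ¬(p % 2 = 0 ∧ q % 2 = 0) := by
    rintro ⟨h1, h2⟩
    have h2p : 2 ∣ p := Nat.dvd_of_mod_eq_zero h1
    have h2q : 2 ∣ q := Nat.dvd_of_mod_eq_zero h2
    have := Nat.dvd_gcd h2p h2q
    rw [hcop] at this; omega
  rcases (by omega : p % 2 = 0 ∧ q % 2 = 1 ∨ p % 2 = 1 ∧ q % 2 = 0) with ⟨hpe, hqo⟩ | ⟨hpo, hqe⟩
  · -- Case A : p even, q odd
    have hq28 : q^2 % 8 = 1 := hq8.2.2.mpr hqo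
    have hp28 : p^2 % 8 = 0 := by omega
    have hp4 : p % 4 = 0 := hp8.2.1.mp hp28
    obtain ⟨n, hn⟩ : ∃ n, p = 4*n := ⟨p/4, by omega⟩
    have hn0 : n ≠ 0 := by omega
    have hp2 : p^2 = 16*n^2 := by rw [hn]; ring
    have hb28 : b^2 % 8 = 0 := by omega
    have hb4 : b % 4 = 0 := hb8.2.1.mp hb28
    obtain ⟨b2, hb2⟩ : ∃ m, b = 4*m := ⟨b/4, by omega⟩
    have hbb : b^2 = 16*b2^2 := by rw [hb2]; ring
    have hb2sq : q^2 + n^2 = b2^2 := by omega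
    have ha' : q^2 + 16*n^2 = a^2 := by omega
    have hn2 : n^2 ≠ 0 := pow_ne_zero 2 hn0
    have hb2a : b2 < a := by
      have h1 : b2^2 < a^2 := by omega
      by_contra hle
      have h2 : a ≤ b2 := by omega
      have := Nat.pow_le_pow_left h2 2
      omega
    have hcop' : Nat.Coprime q n := (hcop.symm).coprime_dvd_right ⟨4, by omega⟩
    exact IH b2 hb2a q n a hcop' hq0 hn0 hb2sq ha'
  · -- Case B : p odd, q even
    have hcop2 : Nat.Coprime p 2 :=
      ((Nat.Prime.coprime_iff_not_dvd Nat.prime_two).mpr (by omega)).symm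
    have hcop4q : Nat.Coprime p (4*q) := by
      have h4 : Nat.Coprime p 4 := by
        have := Nat.Coprime.pow_right 2 hcop2
        norm_num at this; exact this
      exact Nat.Coprime.mul_right h4 hcop
    have htr : PythagoreanTriple (p:ℤ) (4*(q:ℤ)) (b:ℤ) := by
      show _*_+_*_=_*_
      have h1 : (p:ℤ)^2 + 16*(q:ℤ)^2 = (b:ℤ)^2 := by exact_mod_cast hb
      linear_combination h1
    have hgcd : Int.gcd (p:ℤ) (4*(q:ℤ)) = 1 := by
      have h1 : (4*(q:ℤ)) = ((4*q : ℕ) : ℤ) := by push_cast; ring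
      rw [h1, Int.gcd_natCast_natCast]
      exact hcop4q
    obtain ⟨m, n, hmn1, -, hmncop, hmnpar⟩ :=
      PythagoreanTriple.coprime_classification.mp ⟨htr, hgcd⟩
    have haz : (p:ℤ)^2 + (q:ℤ)^2 = (a:ℤ)^2 := by exact_mod_cast ha
    rcases hmn1 with ⟨hp', hq'⟩ | ⟨hp', -⟩
    swap
    · have h2 : (2:ℤ) ∣ (p:ℤ) := ⟨m*n, by linarith⟩
      have : (2:ℕ) ∣ p := by exact_mod_cast h2
      omega
    have hmn : m * n = 2*(q:ℤ) := by linarith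
    have hmnabs : m.natAbs * n.natAbs = 2*q := by
      have h1 : (m*n).natAbs = 2*q := by
        rw [hmn]
        simp [Int.natAbs_mul]
      rwa [Int.natAbs_mul] at h1
    obtain ⟨w, z, x, y, h1, h2, h3, h4, h5, h6⟩ :
        ∃ w z x y : ℕ, w^2 + z^2 = x^2 ∧ w^2 + 16*z^2 = y^2 ∧ Nat.Coprime w z ∧
          w ≠ 0 ∧ z ≠ 0 ∧ x < a := by
      rcases hmnpar with ⟨hme, hno⟩ | ⟨hmo, hne⟩
      · -- m even, n odd : E := m, Od := n
        apply caseB_sub a q m n hno (by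
          rw [show Int.gcd n m = Nat.gcd n.natAbs m.natAbs from rfl, Nat.gcd_comm]
          exact hmncop) hq0 hqe hmnabs
        have : (a:ℤ)^2 = (p:ℤ)^2 + (q:ℤ)^2 := haz.symm
        linear_combination this + ((p:ℤ) + (m^2 - n^2)) * hp'
      · -- m odd, n even : E := n, Od := m
        apply caseB_sub a q n m hmo hmncop hq0 hqe (by rw [Nat.mul_comm]; exact hmnabs)
        linear_combination haz.symm + ((p:ℤ) + (m^2 - n^2)) * hp'
    exact IH x h6 w z y h3 h4 h5 h1 h2



lemma int_of_sq_int (r : ℚ) (n : ℤ) (h : r^2 = (n:ℚ)) : ∃ A : ℤ, (A:ℚ) = r := by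
  have hden : (r^2).den = 1 := by rw [h]; exact Rat.den_intCast _
  rw [Rat.den_pow] at hden
  have h1 : r.den = 1 := by nlinarith [hden]
  exact ⟨r.num, (Rat.den_eq_one_iff r).mp h1⟩

lemma rat_descent (t s u : ℚ) (hs : s^2 = t^2 + 1) (hu : u^2 = t^2 + 16) : t = 0 := by
  by_contra ht0
  set p : ℤ := t.num with hpdef
  set q : ℕ := t.den with hqdef
  have hqnz : q ≠ 0 := t.den_nz
  have hq0 : (q:ℚ) ≠ 0 := Nat.cast_ne_zero.mpr hqnz
  have htval : (p:ℚ) = t * (q:ℚ) := by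
    have h := Rat.num_div_den t
    rw [div_eq_iff hq0] at h
    exact h.symm ▸ rfl
  have hsq : (s * (q:ℚ))^2 = ((p^2 + (q:ℤ)^2 : ℤ) : ℚ) := by
    push_cast
    linear_combination ((q:ℚ))^2 * hs - ((p:ℚ) + t*(q:ℚ)) * htval
  have huq : (u * (q:ℚ))^2 = ((p^2 + 16*(q:ℤ)^2 : ℤ) : ℚ) := by
    push_cast
    linear_combination ((q:ℚ))^2 * hu - ((p:ℚ) + t*(q:ℚ)) * htval
  obtain ⟨A, hA⟩ := int_of_sq_int _ _ hsq
  obtain ⟨B, hB⟩ := int_of_sq_int _ _ huq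
  have hAi : A^2 = p^2 + (q:ℤ)^2 := by
    have : ((A^2 : ℤ) : ℚ) = ((p^2 + (q:ℤ)^2 : ℤ) : ℚ) := by
      push_cast
      rw [← hA] at hsq
      push_cast at hsq
      linarith [hsq]
    exact_mod_cast this
  have hBi : B^2 = p^2 + 16*(q:ℤ)^2 := by
    have : ((B^2 : ℤ) : ℚ) = ((p^2 + 16*(q:ℤ)^2 : ℤ) : ℚ) := by
      push_cast
      rw [← hB] at huq
      push_cast at huq
      linarith [huq]
    exact_mod_cast this
  -- to ℕ
  have hp0 : p.natAbs ≠ 0 := fun h => ht0 (Rat.num_eq_zero.mp (Int.natAbs_eq_zero.mp h))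
  have hcop : Nat.Coprime p.natAbs q := t.reduced
  have hAn : p.natAbs^2 + q^2 = A.natAbs^2 := by
    have h1 : (p.natAbs:ℤ)^2 + (q:ℤ)^2 = (A.natAbs:ℤ)^2 := by
      rw [Int.natAbs_sq, Int.natAbs_sq]; linarith [hAi]
    exact_mod_cast h1
  have hBn : p.natAbs^2 + 16*q^2 = B.natAbs^2 := by
    have h1 : (p.natAbs:ℤ)^2 + 16*(q:ℤ)^2 = (B.natAbs:ℤ)^2 := by
      rw [Int.natAbs_sq, Int.natAbs_sq]; linarith [hBi]
    exact_mod_cast h1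
  exact no_concordant A.natAbs p.natAbs q B.natAbs hcop hp0 hqnz hAn hBn

/-- The elliptic curve `y² + xy + y = x³ + x² − 5x + 2` over `ℚ` (Cremona label 15A3). -/
def E15A3 : WeierstrassCurve ℚ :=
  { a₁ := 1, a₂ := 1, a₃ := 1, a₄ := -5, a₆ := 2 }



lemma E_classify (x y : ℚ) (heq : y^2 + x*y + y = x^3 + x^2 - 5*x + 2) :
    (x = 3/4 ∧ y = -7/8) ∨ (x = 0 ∧ y = -2) ∨ (x = 2 ∧ y = -4) ∨ (x = 1 ∧ y = -1) ∨
    (x = -3 ∧ y = 1) ∨ (x = 0 ∧ y = 1) ∨ (x = 2 ∧ y = 1) := by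
  set W : ℚ := 4*(2*y+x+1) with hWdef
  set X : ℚ := 4*x with hXdef
  have hW : W^2 = (X-3)*(X-4)*(X+12) := by
    rw [hWdef, hXdef]; linear_combination 64*heq
  by_cases hW0 : 2*y+x+1 = 0
  · have hWz : W = 0 := by rw [hWdef, hW0]; ring
    have hprod : (X-3)*(X-4)*(X+12) = 0 := by rw [← hW, hWz]; ring
    rcases mul_eq_zero.mp hprod with h12 | h3
    · rcases mul_eq_zero.mp h12 with h1 | h2
      · left; constructor <;> [skip; skip] <;> rw [hXdef] at h1 <;> linarith
      · right; right; right; left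
        constructor <;> rw [hXdef] at h2 <;> linarith
    · right; right; right; right; left
      constructor <;> rw [hXdef] at h3 <;> linarith
  · have hWne : W ≠ 0 := by
      rw [hWdef]; intro h; apply hW0; linarith
    have h2W : 2*W ≠ 0 := by intro h; apply hWne; linarith
    set t := X*(X-8)/(2*W) with htdef
    set s := (X^2-6*X+24)/(2*W) with hsdef
    set u := (X^2+24*X-96)/(2*W) with hudef
    have hs : s^2 = t^2 + 1 := by
      rw [hsdef, htdef]
      field_simp
      ring_nf
      linear_combination (-4 : ℚ)*hW
    have hu : u^2 = t^2 + 16 := by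
      rw [hudef, htdef]
      field_simp
      ring_nf
      linear_combination (-64 : ℚ)*hW
    have ht := rat_descent t s u hs hu
    have hX08 : X*(X-8) = 0 := by
      rw [htdef] at ht
      rcases div_eq_zero_iff.mp ht with h | h
      · exact h
      · exact absurd h h2W
    rcases mul_eq_zero.mp hX08 with h0 | h8
    · -- x = 0
      have hx : x = 0 := by rw [hXdef] at h0; linarith
      have hy : (y-1)*(y+2) = 0 := by rw [hx] at heq; linear_combination heq
      rcases mul_eq_zero.mp hy with h | h
      · right; right; right; right; right; left; exact ⟨hx, by linarith⟩
      · right; left; exact ⟨hx, by linarith⟩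
    · -- x = 2
      have hx : x = 2 := by rw [hXdef] at h8; linarith
      have hy : (y-1)*(y+4) = 0 := by rw [hx] at heq; linear_combination heq
      rcases mul_eq_zero.mp hy with h | h
      · right; right; right; right; right; right; exact ⟨hx, by linarith⟩
      · right; right; left; exact ⟨hx, by linarith⟩

open WeierstrassCurve.Affine WeierstrassCurve.Affine.Point

abbrev Ec : WeierstrassCurve.Affine ℚ := E15A3.toAffine

lemma pt_ext {x₁ y₁ x₂ y₂ : ℚ} (h₁ : Ec.Nonsingular x₁ y₁) (h₂ : Ec.Nonsingular x₂ y₂)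
    (hx : x₁ = x₂) (hy : y₁ = y₂) : Point.some _ _ h₁ = Point.some _ _ h₂ := by
  subst hx; subst hy; rfl

lemma ns (x y : ℚ) (h : y^2 + x*y + y = x^3 + x^2 - 5*x + 2) (h2 : 2*y + x + 1 ≠ 0) :
    Ec.Nonsingular x y := by
  rw [nonsingular_iff, equation_iff]
  constructor
  · show y^2 + E15A3.a₁*x*y + E15A3.a₃*y = _
    simp only [E15A3]
    linarith
  · right
    show y ≠ -y - E15A3.a₁ * x - E15A3.a₃
    simp only [E15A3]
    intro hc; apply h2; linarith

lemma ns2 (x y : ℚ) (h : y^2 + x*y + y = x^3 + x^2 - 5*x + 2)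
    (h2 : y ≠ 3*x^2 + 2*x - 5) : Ec.Nonsingular x y := by
  rw [nonsingular_iff, equation_iff]
  constructor
  · show y^2 + E15A3.a₁*x*y + E15A3.a₃*y = _
    simp only [E15A3]
    linarith
  · left
    show E15A3.a₁ * y ≠ 3*x^2 + 2*E15A3.a₂*x + E15A3.a₄
    simp only [E15A3]
    intro hc; apply h2; linarith

lemma nsG : Ec.Nonsingular 0 1 := ns 0 1 (by norm_num) (by norm_num)
lemma nsH : Ec.Nonsingular (3/4) (-7/8) := ns2 (3/4) (-7/8) (by norm_num) (by norm_num)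
lemma nsT : Ec.Nonsingular 1 (-1) := ns2 1 (-1) (by norm_num) (by norm_num)
lemma nsGn : Ec.Nonsingular 0 (-2) := ns 0 (-2) (by norm_num) (by norm_num)
lemma nsGH : Ec.Nonsingular 2 1 := ns 2 1 (by norm_num) (by norm_num)
lemma nsTH : Ec.Nonsingular (-3) 1 := ns2 (-3) 1 (by norm_num) (by norm_num)
lemma nsGnH : Ec.Nonsingular 2 (-4) := ns 2 (-4) (by norm_num) (by norm_num)

noncomputable def PG : Ec.Point := Point.some _ _ nsG
noncomputable def PH : Ec.Point := Point.some _ _ nsH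
noncomputable def PT : Ec.Point := Point.some _ _ nsT
noncomputable def PGn : Ec.Point := Point.some _ _ nsGn
noncomputable def PGH : Ec.Point := Point.some _ _ nsGH
noncomputable def PTH : Ec.Point := Point.some _ _ nsTH
noncomputable def PGnH : Ec.Point := Point.some _ _ nsGnH

lemma negY_G : Ec.negY 0 1 = -2 := by
  show -(1:ℚ) - E15A3.a₁ * 0 - E15A3.a₃ = -2
  simp only [E15A3]; norm_num

lemma hGneg : -PG = PGn := by
  rw [PG, PGn, neg_some]
  exact pt_ext _ _ rfl negY_G

lemma slope_G : Ec.slope 0 0 1 1 = -2 := by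
  rw [slope_of_Y_ne rfl (by rw [negY_G]; norm_num)]
  rw [negY_G]
  show ((3:ℚ)*0^2 + 2*E15A3.a₂*0 + E15A3.a₄ - E15A3.a₁*1) / (1 - -2) = -2
  simp only [E15A3]; norm_num

lemma hGG : PG + PG = PT := by
  rw [PG, PT, add_self_of_Y_ne (by rw [negY_G]; norm_num)]
  refine pt_ext _ _ ?_ ?_ <;>
    simp only [WeierstrassCurve.Affine.addX, WeierstrassCurve.Affine.addY,
      WeierstrassCurve.Affine.negAddY, WeierstrassCurve.Affine.negY, slope_G, E15A3] <;>
    norm_num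

lemma hTT : PT + PT = 0 := by
  rw [PT]
  apply add_self_of_Y_eq
  show (-1:ℚ) = -(-1) - E15A3.a₁*1 - E15A3.a₃
  simp only [E15A3]; norm_num

lemma hHH : PH + PH = 0 := by
  rw [PH]
  apply add_self_of_Y_eq
  show (-7/8:ℚ) = -(-7/8) - E15A3.a₁*(3/4) - E15A3.a₃
  simp only [E15A3]; norm_num

lemma slope_GH : Ec.slope 0 (3/4) 1 (-7/8) = -5/2 := by
  rw [slope_of_X_ne (by norm_num)]; norm_num

lemma hGH : PG + PH = PGH := by
  rw [PG, PH, PGH, add_of_X_ne (by norm_num)]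
  refine pt_ext _ _ ?_ ?_ <;>
    simp only [WeierstrassCurve.Affine.addX, WeierstrassCurve.Affine.addY,
      WeierstrassCurve.Affine.negAddY, WeierstrassCurve.Affine.negY, slope_GH, E15A3] <;>
    norm_num

lemma slope_TH : Ec.slope 1 (3/4) (-1) (-7/8) = -1/2 := by
  rw [slope_of_X_ne (by norm_num)]; norm_num

lemma hTH : PT + PH = PTH := by
  rw [PT, PH, PTH, add_of_X_ne (by norm_num)]
  refine pt_ext _ _ ?_ ?_ <;>
    simp only [WeierstrassCurve.Affine.addX, WeierstrassCurve.Affine.addY,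
      WeierstrassCurve.Affine.negAddY, WeierstrassCurve.Affine.negY, slope_TH, E15A3] <;>
    norm_num

lemma slope_GnH : Ec.slope 0 (3/4) (-2) (-7/8) = 3/2 := by
  rw [slope_of_X_ne (by norm_num)]; norm_num

lemma hGnH : PGn + PH = PGnH := by
  rw [PGn, PH, PGnH, add_of_X_ne (by norm_num)]
  refine pt_ext _ _ ?_ ?_ <;>
    simp only [WeierstrassCurve.Affine.addX, WeierstrassCurve.Affine.addY,
      WeierstrassCurve.Affine.negAddY, WeierstrassCurve.Affine.negY, slope_GnH, E15A3] <;>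
    norm_num

-- the homomorphism
noncomputable def fG : ℤ →+ Ec.Point := zmultiplesHom Ec.Point PG
noncomputable def fH : ℤ →+ Ec.Point := zmultiplesHom Ec.Point PH

lemma h2G : (2:ℤ) • PG = PT := by rw [two_zsmul, hGG]
lemma h4G : fG (4:ℕ) = 0 := by
  show ((4:ℕ):ℤ) • PG = 0
  rw [show ((4:ℕ):ℤ) = 2*2 by norm_num, mul_zsmul, h2G, two_zsmul, hTT]
lemma h2H : fH (2:ℕ) = 0 := by
  show ((2:ℕ):ℤ) • PH = 0
  rw [show ((2:ℕ):ℤ) = 2 by norm_num, two_zsmul, hHH]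

noncomputable def phi : ZMod 4 →+ Ec.Point := ZMod.lift 4 ⟨fG, h4G⟩
noncomputable def psi : ZMod 2 →+ Ec.Point := ZMod.lift 2 ⟨fH, h2H⟩
noncomputable def Fiso : ZMod 4 × ZMod 2 →+ Ec.Point := phi.coprod psi

lemma phi1 : phi 1 = PG := by
  have h := ZMod.lift_coe 4 ⟨fG, h4G⟩ 1
  simp only [Int.cast_one] at h
  rw [phi, h]
  show (1:ℤ) • PG = PG
  rw [one_zsmul]

lemma phi2 : phi 2 = PT := by
  have h := ZMod.lift_coe 4 ⟨fG, h4G⟩ 2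
  simp only [Int.cast_two] at h
  rw [phi, h]
  exact h2G

lemma phi3 : phi 3 = PGn := by
  have h : (3 : ZMod 4) = -1 := by decide
  rw [h, _root_.map_neg, phi1, hGneg]

lemma psi1 : psi 1 = PH := by
  have h := ZMod.lift_coe 2 ⟨fH, h2H⟩ 1
  simp only [Int.cast_one] at h
  rw [psi, h]
  show (1:ℤ) • PH = PH
  rw [one_zsmul]

lemma Fval (i : ZMod 4) (j : ZMod 2) : Fiso (i, j) = phi i + psi j := rfl

lemma Fv00 : Fiso (0, 0) = 0 := by rw [Fval, _root_.map_zero, _root_.map_zero, add_zero]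
lemma Fv10 : Fiso (1, 0) = PG := by rw [Fval, _root_.map_zero, add_zero, phi1]
lemma Fv20 : Fiso (2, 0) = PT := by rw [Fval, _root_.map_zero, add_zero, phi2]
lemma Fv30 : Fiso (3, 0) = PGn := by rw [Fval, _root_.map_zero, add_zero, phi3]
lemma Fv01 : Fiso (0, 1) = PH := by rw [Fval, _root_.map_zero, zero_add, psi1]
lemma Fv11 : Fiso (1, 1) = PGH := by rw [Fval, phi1, psi1, hGH]
lemma Fv21 : Fiso (2, 1) = PTH := by rw [Fval, phi2, psi1, hTH]
lemma Fv31 : Fiso (3, 1) = PGnH := by rw [Fval, phi3, psi1, hGnH]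

/-- The elliptic curve `y² + xy + y = x³ + x² − 5x + 2` over `ℚ` (15A3) has Mordell–Weil group
isomorphic to `ℤ/4ℤ × ℤ/2ℤ`; its rational points are exactly the point at infinity together with
the seven affine points `(3/4, -7/8)`, `(0,-2)`, `(2,-4)`, `(1,-1)`, `(-3,1)`, `(0,1)`,
`(2,1)`. -/
theorem E15A3_mordell_weil :
    (∀ x y : ℚ, E15A3.toAffine.Equation x y ↔
      (x, y) ∈ ({(3/4, -7/8), (0, -2), (2, -4), (1, -1), (-3, 1), (0, 1),
        (2, 1)} : Set (ℚ × ℚ))) ∧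
    Nonempty (E15A3.toAffine.Point ≃+ ZMod 4 × ZMod 2) := by
  have hEq : ∀ x y : ℚ, Ec.Equation x y → y^2 + x*y + y = x^3 + x^2 - 5*x + 2 := by
    intro x y h
    rw [equation_iff] at h
    replace h : y^2 + E15A3.a₁*x*y + E15A3.a₃*y
        = x^3 + E15A3.a₂*x^2 + E15A3.a₄*x + E15A3.a₆ := h
    simp only [E15A3] at h
    linarith
  constructor
  · intro x y
    constructor
    · intro h
      rcases E_classify x y (hEq x y h) with ⟨hx,hy⟩|⟨hx,hy⟩|⟨hx,hy⟩|⟨hx,hy⟩|⟨hx,hy⟩|⟨hx,hy⟩|⟨hx,hy⟩ <;>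
        subst hx <;> subst hy <;>
        simp [Set.mem_insert_iff, Set.mem_singleton_iff, Prod.mk.injEq]
    · intro h
      simp only [Set.mem_insert_iff, Set.mem_singleton_iff, Prod.mk.injEq] at h
      show Ec.Equation x y
      rw [equation_iff]
      show y^2 + E15A3.a₁*x*y + E15A3.a₃*y = x^3 + E15A3.a₂*x^2 + E15A3.a₄*x + E15A3.a₆
      simp only [E15A3]
      rcases h with ⟨hx,hy⟩|⟨hx,hy⟩|⟨hx,hy⟩|⟨hx,hy⟩|⟨hx,hy⟩|⟨hx,hy⟩|⟨hx,hy⟩ <;>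
        subst hx <;> subst hy <;> norm_num
  · refine ⟨(AddEquiv.ofBijective Fiso ⟨?_, ?_⟩).symm.trans ?_⟩
    rotate_right
    · exact AddEquiv.refl _
    · rw [injective_iff_map_eq_zero]
      rintro ⟨i, j⟩ hz
      have hi : i = 0 ∨ i = 1 ∨ i = 2 ∨ i = 3 :=
        (by decide : ∀ i : ZMod 4, i = 0 ∨ i = 1 ∨ i = 2 ∨ i = 3) i
      have hj : j = 0 ∨ j = 1 := (by decide : ∀ j : ZMod 2, j = 0 ∨ j = 1) j
      rcases hi with rfl|rfl|rfl|rfl <;> rcases hj with rfl|rfl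
      · rfl
      · rw [Fv01, PH] at hz; exact absurd hz (some_ne_zero _)
      · rw [Fv10, PG] at hz; exact absurd hz (some_ne_zero _)
      · rw [Fv11, PGH] at hz; exact absurd hz (some_ne_zero _)
      · rw [Fv20, PT] at hz; exact absurd hz (some_ne_zero _)
      · rw [Fv21, PTH] at hz; exact absurd hz (some_ne_zero _)
      · rw [Fv30, PGn] at hz; exact absurd hz (some_ne_zero _)
      · rw [Fv31, PGnH] at hz; exact absurd hz (some_ne_zero _)
    · intro P
      cases P with
      | zero => exact ⟨(0,0), Fv00⟩
      | @some x y h =>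
        rcases E_classify x y (hEq x y h.left)
          with ⟨hx,hy⟩|⟨hx,hy⟩|⟨hx,hy⟩|⟨hx,hy⟩|⟨hx,hy⟩|⟨hx,hy⟩|⟨hx,hy⟩ <;>
          subst hx <;> subst hy
        · exact ⟨(0,1), by rw [Fv01]; rfl⟩
        · exact ⟨(3,0), by rw [Fv30]; rfl⟩
        · exact ⟨(3,1), by rw [Fv31]; rfl⟩
        · exact ⟨(2,0), by rw [Fv20]; rfl⟩
        · exact ⟨(2,1), by rw [Fv21]; rfl⟩
        · exact ⟨(1,0), by rw [Fv10]; rfl⟩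
        · exact ⟨(1,1), by rw [Fv11]; rfl⟩
end

section
/- Let C be the smooth projective genus-1 curve over ℚ with affine model y² = −7(x⁴ − 10x³ + 27x² − 10x − 27). Then the only rational points of C are (5/2, 7/4) and (5/2, −7/4). -/
set_option maxRecDepth 8000

section helpers

lemma isCoprime_of_no_prime (a b : ℤ)
    (h : ∀ p : ℕ, p.Prime → (p:ℤ) ∣ a → (p:ℤ) ∣ b → False) : IsCoprime a b := by
  rw [Int.isCoprime_iff_gcd_eq_one]
  by_contra hg
  obtain ⟨p, pp, pdvd⟩ := Nat.exists_prime_and_dvd hg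
  exact h p pp
    (dvd_trans (Int.natCast_dvd_natCast.2 pdvd) (Int.gcd_dvd_left _ _))
    (dvd_trans (Int.natCast_dvd_natCast.2 pdvd) (Int.gcd_dvd_right _ _))

lemma pow4_of_coprime (a b c : ℤ) (ha : 0 < a) (hab : IsCoprime a b)
    (h : a * b = c ^ 4) : ∃ d : ℤ, 0 < d ∧ a = d ^ 4 := by
  obtain ⟨d, hd⟩ := exists_associated_pow_of_mul_eq_pow' hab h
  obtain ⟨u, hu⟩ := hd
  have hd4 : (0:ℤ) ≤ d ^ 4 := by positivity
  rcases Int.isUnit_iff.1 u.isUnit with h1 | h1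
  · rw [h1, mul_one] at hu
    have hdne : d ≠ 0 := by rintro rfl; rw [← hu] at ha; simp at ha
    refine ⟨|d|, abs_pos.2 hdne, by rw [← hu, ← abs_pow]; exact (abs_of_nonneg hd4).symm⟩
  · exfalso
    rw [h1] at hu
    nlinarith [hu, ha]

lemma notdvd_of_coprime (p : ℤ) (hp : ¬ IsUnit p) {a b : ℤ} (hab : IsCoprime a b)
    (hpa : p ∣ a) : ¬ p ∣ b := fun hpb => hp (hab.isUnit_of_dvd' hpa hpb)

lemma pow4pair (P Q e : ℤ) (hP : 0 < P) (hQ : 0 < Q) (hcop : IsCoprime P Q)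
    (h : P * Q = e ^ 4) :
    ∃ u v : ℤ, 0 < u ∧ 0 < v ∧ IsCoprime u v ∧ u * v = (e.natAbs : ℤ) ∧
      P = u ^ 4 ∧ Q = v ^ 4 := by
  obtain ⟨u, hu, hu4⟩ := pow4_of_coprime P Q e hP hcop h
  obtain ⟨v, hv, hv4⟩ := pow4_of_coprime Q P e hQ hcop.symm (by rw [mul_comm]; exact h)
  have hcd : IsCoprime u v := by
    have h' : IsCoprime (u^4) (v^4) := by rw [← hu4, ← hv4]; exact hcop
    exact (h'.of_isCoprime_of_dvd_left (dvd_pow_self u (by norm_num))).of_isCoprime_of_dvd_right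
      (dvd_pow_self v (by norm_num))
  refine ⟨u, v, hu, hv, hcd, ?_, hu4, hv4⟩
  have h4 : (u*v)^4 = ((e.natAbs : ℤ))^4 := by
    have h' : (u*v)^4 = u^4 * v^4 := by ring
    rw [h', ← hu4, ← hv4, h, ← Int.abs_eq_natAbs, pow_abs,
      abs_of_nonneg (show (0:ℤ) ≤ e^4 by positivity)]
  exact (pow_left_inj₀ (by positivity) (by positivity) (by norm_num)).1 h4

lemma split343 (P Q e : ℤ) (hP : 0 < P) (hQ : 0 < Q) (hcop : IsCoprime P Q)
    (h : P * Q = 343 * e ^ 4) :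
    ∃ c d : ℤ, 0 < c ∧ 0 < d ∧ IsCoprime c d ∧ ¬ (7:ℤ) ∣ d ∧ c * d = (e.natAbs : ℤ) ∧
      ((P = 343 * c ^ 4 ∧ Q = d ^ 4) ∨ (P = d ^ 4 ∧ Q = 343 * c ^ 4)) := by
  have h7 : Prime (7 : ℤ) := by norm_num
  have key : ∀ P' Q' : ℤ, 0 < P' → 0 < Q' → IsCoprime P' Q' → P' * Q' = 343 * e ^ 4 →
      (7:ℤ) ∣ P' → ∃ c d : ℤ, 0 < c ∧ 0 < d ∧ IsCoprime c d ∧ ¬ (7:ℤ) ∣ d ∧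
        c * d = (e.natAbs : ℤ) ∧ P' = 343 * c ^ 4 ∧ Q' = d ^ 4 := by
    intro P' Q' hP' hQ' hcop' heq' hdvd
    have hnQ : ¬ (7:ℤ) ∣ Q' := notdvd_of_coprime 7 (by norm_num [Int.isUnit_iff]) hcop' hdvd
    have h343 : (343:ℤ) ∣ P' := by
      have h' : (7:ℤ)^3 ∣ P' := by
        refine h7.pow_dvd_of_dvd_mul_right 3 hnQ ?_
        rw [heq']; exact Dvd.intro (e^4) (by ring)
      norm_num at h'; exact h'
    obtain ⟨P1, hP1⟩ := h343
    have hP1pos : 0 < P1 := by nlinarith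
    have heq1 : P1 * Q' = e ^ 4 := by
      apply mul_left_cancel₀ (show (343:ℤ) ≠ 0 by norm_num)
      rw [← heq', hP1]; ring
    have hcop1 : IsCoprime P1 Q' :=
      hcop'.of_isCoprime_of_dvd_left ⟨343, by rw [hP1]; ring⟩
    obtain ⟨c, d, hc, hd, hcd, hcde, hc4, hd4⟩ := pow4pair P1 Q' e hP1pos hQ' hcop1 heq1
    have h7d : ¬ (7:ℤ) ∣ d := fun h7d => hnQ (by rw [hd4]; exact dvd_pow h7d (by norm_num))
    exact ⟨c, d, hc, hd, hcd, h7d, hcde, by rw [hP1, hc4], hd4⟩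
  rcases h7.dvd_or_dvd (show (7:ℤ) ∣ P * Q by rw [h]; exact Dvd.intro (49 * e^4) (by ring))
    with hp | hq
  · obtain ⟨c, d, h1,h2,h3,h4,h5,h6,h7'⟩ := key P Q hP hQ hcop h hp
    exact ⟨c,d,h1,h2,h3,h4,h5,Or.inl ⟨h6,h7'⟩⟩
  · obtain ⟨c, d, h1,h2,h3,h4,h5,h6,h7'⟩ := key Q P hQ hP hcop.symm (by rw [mul_comm]; exact h) hq
    exact ⟨c,d,h1,h2,h3,h4,h5,Or.inr ⟨h7',h6⟩⟩

lemma split5488 (P Q e : ℤ) (hP : 0 < P) (hQ : 0 < Q) (hcop : IsCoprime P Q)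
    (h : P * Q = 5488 * e ^ 4) :
    ∃ u v : ℤ, 0 < u ∧ 0 < v ∧ IsCoprime u v ∧ Odd v ∧ u * v = (e.natAbs : ℤ) ∧
      ((P + Q = 5488 * u ^ 4 + v ^ 4 ∧ ¬ (7:ℤ) ∣ v) ∨
       (P + Q = 16 * u ^ 4 + 343 * v ^ 4 ∧ ¬ (7:ℤ) ∣ u)) := by
  have h2 : Prime (2 : ℤ) := by norm_num
  have h7 : Prime (7 : ℤ) := by norm_num
  have key1 : ∀ P' Q' : ℤ, 0 < P' → 0 < Q' → IsCoprime P' Q' → P' * Q' = 5488 * e ^ 4 →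
      (2:ℤ) ∣ P' → (7:ℤ) ∣ P' → ∃ u v : ℤ, 0 < u ∧ 0 < v ∧ IsCoprime u v ∧ Odd v ∧
        u * v = (e.natAbs : ℤ) ∧ P' = 5488 * u ^ 4 ∧ Q' = v ^ 4 ∧ ¬ (7:ℤ) ∣ v := by
    intro P' Q' hP' hQ' hcop' heq' hdvd2 hdvd7
    have hnQ2 : ¬ (2:ℤ) ∣ Q' := notdvd_of_coprime 2 (by norm_num [Int.isUnit_iff]) hcop' hdvd2
    have hnQ7 : ¬ (7:ℤ) ∣ Q' := notdvd_of_coprime 7 (by norm_num [Int.isUnit_iff]) hcop' hdvd7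
    have h16 : (16:ℤ) ∣ P' := by
      have h' : (2:ℤ)^4 ∣ P' := by
        refine h2.pow_dvd_of_dvd_mul_right 4 hnQ2 ?_
        rw [heq']; exact ⟨343 * e^4, by ring⟩
      norm_num at h'; exact h'
    have h343 : (343:ℤ) ∣ P' := by
      have h' : (7:ℤ)^3 ∣ P' := by
        refine h7.pow_dvd_of_dvd_mul_right 3 hnQ7 ?_
        rw [heq']; exact ⟨16 * e^4, by ring⟩
      norm_num at h'; exact h'
    have h5488 : (5488:ℤ) ∣ P' := by
      have h' : (16 * 343 : ℤ) ∣ P' :=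
        (show IsCoprime (16:ℤ) 343 by norm_num [Int.isCoprime_iff_gcd_eq_one]).mul_dvd h16 h343
      norm_num at h'; exact h'
    obtain ⟨P1, hP1⟩ := h5488
    have hP1pos : 0 < P1 := by nlinarith
    have heq1 : P1 * Q' = e ^ 4 := by
      apply mul_left_cancel₀ (show (5488:ℤ) ≠ 0 by norm_num)
      rw [← heq', hP1]; ring
    have hcop1 : IsCoprime P1 Q' :=
      hcop'.of_isCoprime_of_dvd_left ⟨5488, by rw [hP1]; ring⟩
    obtain ⟨u, v, hu, hv, huv, huve, hu4, hv4⟩ := pow4pair P1 Q' e hP1pos hQ' hcop1 heq1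
    have hvodd : Odd v := by
      rcases Int.even_or_odd v with hev | hov
      · exfalso
        apply hnQ2
        rw [hv4]
        exact dvd_pow hev.two_dvd (by norm_num)
      · exact hov
    have h7v : ¬ (7:ℤ) ∣ v := fun hdv => hnQ7 (by rw [hv4]; exact dvd_pow hdv (by norm_num))
    exact ⟨u, v, hu, hv, huv, hvodd, huve, by rw [hP1, hu4], hv4, h7v⟩
  have key2 : ∀ P' Q' : ℤ, 0 < P' → 0 < Q' → IsCoprime P' Q' → P' * Q' = 5488 * e ^ 4 →
      (2:ℤ) ∣ P' → (7:ℤ) ∣ Q' → ∃ u v : ℤ, 0 < u ∧ 0 < v ∧ IsCoprime u v ∧ Odd v ∧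
        u * v = (e.natAbs : ℤ) ∧ P' = 16 * u ^ 4 ∧ Q' = 343 * v ^ 4 ∧ ¬ (7:ℤ) ∣ u := by
    intro P' Q' hP' hQ' hcop' heq' hdvd2 hdvd7
    have hnQ2 : ¬ (2:ℤ) ∣ Q' := notdvd_of_coprime 2 (by norm_num [Int.isUnit_iff]) hcop' hdvd2
    have hnP7 : ¬ (7:ℤ) ∣ P' := notdvd_of_coprime 7 (by norm_num [Int.isUnit_iff]) hcop'.symm hdvd7
    have h16 : (16:ℤ) ∣ P' := by
      have h' : (2:ℤ)^4 ∣ P' := by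
        refine h2.pow_dvd_of_dvd_mul_right 4 hnQ2 ?_
        rw [heq']; exact ⟨343 * e^4, by ring⟩
      norm_num at h'; exact h'
    have h343 : (343:ℤ) ∣ Q' := by
      have h' : (7:ℤ)^3 ∣ Q' := by
        refine h7.pow_dvd_of_dvd_mul_left 3 hnP7 ?_
        rw [heq']; exact ⟨16 * e^4, by ring⟩
      norm_num at h'; exact h'
    obtain ⟨P1, hP1⟩ := h16
    obtain ⟨Q1, hQ1⟩ := h343
    have hP1pos : 0 < P1 := by nlinarith
    have hQ1pos : 0 < Q1 := by nlinarith
    have heq1 : P1 * Q1 = e ^ 4 := by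
      apply mul_left_cancel₀ (show (5488:ℤ) ≠ 0 by norm_num)
      have h' : P' * Q' = (5488:ℤ) * (P1 * Q1) := by rw [hP1, hQ1]; ring
      rw [← heq', h']
    have hcop1 : IsCoprime P1 Q1 :=
      (hcop'.of_isCoprime_of_dvd_left ⟨16, by rw [hP1]; ring⟩).of_isCoprime_of_dvd_right
        ⟨343, by rw [hQ1]; ring⟩
    obtain ⟨u, v, hu, hv, huv, huve, hu4, hv4⟩ := pow4pair P1 Q1 e hP1pos hQ1pos hcop1 heq1
    have hvodd : Odd v := by
      rcases Int.even_or_odd v with hev | hov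
      · exfalso
        apply hnQ2
        rw [hQ1, hv4]
        exact Dvd.dvd.mul_left (dvd_pow hev.two_dvd (by norm_num)) 343
      · exact hov
    have h7u : ¬ (7:ℤ) ∣ u := fun hdu => hnP7
      (by rw [hP1, hu4]; exact Dvd.dvd.mul_left (dvd_pow hdu (by norm_num)) 16)
    exact ⟨u, v, hu, hv, huv, hvodd, huve, by rw [hP1, hu4], by rw [hQ1, hv4], h7u⟩
  have hd2 : (2:ℤ) ∣ P ∨ (2:ℤ) ∣ Q :=
    h2.dvd_or_dvd (show (2:ℤ) ∣ P * Q by rw [h]; exact ⟨2744 * e^4, by ring⟩)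
  have hd7 : (7:ℤ) ∣ P ∨ (7:ℤ) ∣ Q :=
    h7.dvd_or_dvd (show (7:ℤ) ∣ P * Q by rw [h]; exact ⟨784 * e^4, by ring⟩)
  rcases hd2 with h2P | h2Q <;> rcases hd7 with h7P | h7Q
  · obtain ⟨u,v,a1,a2,a3,a4,a5,b1,b2,b3⟩ := key1 P Q hP hQ hcop h h2P h7P
    exact ⟨u,v,a1,a2,a3,a4,a5, Or.inl ⟨by rw [b1,b2], b3⟩⟩
  · obtain ⟨u,v,a1,a2,a3,a4,a5,b1,b2,b3⟩ := key2 P Q hP hQ hcop h h2P h7Q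
    exact ⟨u,v,a1,a2,a3,a4,a5, Or.inr ⟨by rw [b1,b2], b3⟩⟩
  · obtain ⟨u,v,a1,a2,a3,a4,a5,b1,b2,b3⟩ := key2 Q P hQ hP hcop.symm (by rw [mul_comm]; exact h)
      h2Q h7P
    exact ⟨u,v,a1,a2,a3,a4,a5, Or.inr ⟨by rw [b1,b2]; ring, b3⟩⟩
  · obtain ⟨u,v,a1,a2,a3,a4,a5,b1,b2,b3⟩ := key1 Q P hQ hP hcop.symm (by rw [mul_comm]; exact h)
      h2Q h7Q
    exact ⟨u,v,a1,a2,a3,a4,a5, Or.inl ⟨by rw [b1,b2]; ring, b3⟩⟩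

lemma both_pos {A B : ℤ} (hprod : 0 < A*B) (hsum : 0 < A+B) : 0 < A ∧ 0 < B := by
  rcases mul_pos_iff.1 hprod with ⟨h1,h2⟩|⟨h1,h2⟩
  · exact ⟨h1,h2⟩
  · linarith

lemma not_unit_prime {p : ℕ} (pp : p.Prime) : ¬ IsUnit (p:ℤ) :=
  (Nat.prime_iff_prime_int.mp pp).not_unit

lemma prime_two_of_dvd_two {p : ℕ} (pp : p.Prime) (h : (p:ℤ) ∣ 2) : p = 2 := by
  have h' : p ∣ 2 := by exact_mod_cast h
  exact (Nat.prime_dvd_prime_iff_eq pp Nat.prime_two).1 h'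

lemma prime_seven_of_dvd {p : ℕ} (pp : p.Prime) (h : (p:ℤ) ∣ 7) : p = 7 := by
  have h' : p ∣ 7 := by exact_mod_cast h
  exact (Nat.prime_dvd_prime_iff_eq pp (by norm_num)).1 h'

end helpers

section decides

lemma dec128 : ∀ α β : ZMod 128, α*β = 64 → (α+β).val % 16 ≠ 8 := by decide
lemma dec128' : ∀ τ : ZMod 128, (16*τ+8).val % 16 = 8 := by decide
lemma decV1b : ∀ v c d : ZMod 16,
    4*(2*v+1)^2 ≠ 294*(2*c+1)^2*(2*d+1)^2 - (2*d+1)^4 + 343*(2*c+1)^4 := by decide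
lemma decV2a : ∀ u c d : ZMod 16,
    64*u^2 ≠ 294*(2*c+1)^2*(2*d+1)^2 + 343*(2*c+1)^4 - (2*d+1)^4 := by decide
lemma decV1c1 : ∀ v c d : ZMod 16,
    (2*v+1)^2 ≠ 294*(2*c+1)^2*d^2 + 343*(2*c+1)^4 - d^4 := by decide
lemma decV1c2 : ∀ v c d : ZMod 16,
    (2*v+1)^2 ≠ 294*c^2*(2*d+1)^2 + 343*c^4 - (2*d+1)^4 := by decide

end decides


/-- both `Q` and `E` odd leads to a 2-adic contradiction. -/
lemma regimeII (E Q N : ℤ) (hQo : Odd Q) (hEo : Odd E)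
    (heq : N^2 = Q^4 + 294*E^2*Q^2 - 343*E^4) : False := by
  obtain ⟨a, rfl⟩ := hQo
  obtain ⟨b, rfl⟩ := hEo
  set r : ℤ := (2*a+1)^2 + 147*(2*b+1)^2 with hr
  have hAB : (r - N) * (r + N) = 128 * (2744*b^4+5488*b^3+4116*b^2+1372*b+171) + 64 := by
    rw [hr]; linear_combination -heq
  obtain ⟨c, hc⟩ := Int.even_mul_succ_self a
  obtain ⟨d, hd⟩ := Int.even_mul_succ_self b
  have hT : (r - N) + (r + N) = 16*(c + 147*d + 18) + 8 := by
    rw [hr]; linear_combination (8:ℤ)*hc + 1176*hd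
  have h0 : (128 : ZMod 128) = 0 := by decide
  have hc1 : ((r - N : ℤ) : ZMod 128) * ((r + N : ℤ) : ZMod 128) = 64 := by
    have := congrArg (fun z : ℤ => (z : ZMod 128)) hAB
    push_cast at this
    rw [h0] at this
    simpa using this
  have hc2 : ((r - N : ℤ) : ZMod 128) + ((r + N : ℤ) : ZMod 128)
      = 16*((c + 147*d + 18 : ℤ) : ZMod 128) + 8 := by
    have := congrArg (fun z : ℤ => (z : ZMod 128)) hT
    push_cast at this ⊢
    linear_combination this
  exact dec128 _ _ hc1 (by rw [hc2]; exact dec128' _)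




/-- Regime I : `Q² + 147E²` odd (exactly one of `Q`, `E` even). -/
lemma regimeI (K : ℕ)
    (IH : ∀ e q n : ℤ, e.natAbs ≤ K → IsCoprime q e → ¬ (7:ℤ) ∣ q →
        n^2 = q^4 + 294*e^2*q^2 - 343*e^4 → e = 0)
    (E Q N : ℤ) (hEpos : 0 < E) (hQpos : 0 < Q) (hNnn : 0 ≤ N)
    (hk : E.natAbs ≤ K + 1) (hcop : IsCoprime Q E) (h7Q : ¬ (7:ℤ) ∣ Q)
    (hrodd : Odd (Q^2 + 147*E^2)) (hNodd : Odd N)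
    (heq : N^2 = Q^4 + 294*E^2*Q^2 - 343*E^4) : False := by
  have hfac : (Q^2 + 147*E^2 - N) * (Q^2 + 147*E^2 + N) = 21952 * E^4 := by
    linear_combination -heq
  have hpos := both_pos (show 0 < (Q^2 + 147*E^2 - N)*(Q^2 + 147*E^2 + N) by
      rw [hfac]; positivity)
    (show 0 < (Q^2 + 147*E^2 - N)+(Q^2 + 147*E^2 + N) by
      have h' : 0 < Q^2 + 147*E^2 := by positivity
      linarith)
  obtain ⟨H1, hH1⟩ := hrodd.sub_odd hNodd
  obtain ⟨H2, hH2⟩ := hrodd.add_odd hNodd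
  have hH1pos : 0 < H1 := by have := hpos.1; rw [hH1] at this; linarith
  have hH2pos : 0 < H2 := by have := hpos.2; rw [hH2] at this; linarith
  have hprod : H1 * H2 = 5488 * E^4 := by
    apply mul_left_cancel₀ (show (4:ℤ) ≠ 0 by norm_num)
    rw [show (4:ℤ)*(H1*H2) = (H1+H1)*(H2+H2) by ring, ← hH1, ← hH2, hfac]; ring
  have hsum : H1 + H2 = Q^2 + 147*E^2 := by linarith [hH1, hH2]
  have hdiff : H2 - H1 = N := by linarith [hH1, hH2]
  have hcopH : IsCoprime H1 H2 := by
    apply isCoprime_of_no_prime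
    intro p pp hp1 hp2
    have hpr : (p:ℤ) ∣ Q^2 + 147*E^2 := hsum ▸ dvd_add hp1 hp2
    have hpP : (p:ℤ) ∣ 16*(343*E^4) := by
      rw [show (16:ℤ)*(343*E^4) = 5488*E^4 by ring, ← hprod]; exact hp1.mul_right H2
    have hpint : Prime (p:ℤ) := Nat.prime_iff_prime_int.mp pp
    by_cases hp2' : p = 2
    · subst hp2'
      obtain ⟨k, hk'⟩ := hpr
      obtain ⟨t, ht⟩ := hrodd
      omega
    rcases hpint.dvd_mul.1 hpP with h16 | hrest
    · exact hp2' (prime_two_of_dvd_two pp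
        (hpint.dvd_of_dvd_pow (show (p:ℤ) ∣ 2^4 by norm_num; exact_mod_cast h16)))
    rcases hpint.dvd_mul.1 hrest with h343 | hE4
    · have hp7 : p = 7 := prime_seven_of_dvd pp
        (hpint.dvd_of_dvd_pow (show (p:ℤ) ∣ 7^3 by norm_num; exact_mod_cast h343))
      subst hp7
      apply h7Q
      apply hpint.dvd_of_dvd_pow (n := 2)
      have h147 : (7:ℤ) ∣ 147*E^2 := ⟨21*E^2, by ring⟩
      have h' := dvd_sub hpr h147
      simpa using h'
    · have hpE : (p:ℤ) ∣ E := hpint.dvd_of_dvd_pow hE4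
      obtain ⟨t, ht⟩ := hpE
      have hpQ : (p:ℤ) ∣ Q := by
        apply hpint.dvd_of_dvd_pow (n := 2)
        have h147 : (p:ℤ) ∣ 147*E^2 := ⟨147*t*E, by rw [ht]; ring⟩
        have h' := dvd_sub hpr h147
        simpa using h'
      exact not_unit_prime pp (hcop.isUnit_of_dvd' hpQ ⟨t, ht⟩)
  obtain ⟨u, v, hu, hv, huv, hvodd, huvE, hcase⟩ := split5488 H1 H2 E hH1pos hH2pos hcopH hprod
  rw [Int.natAbs_of_nonneg (le_of_lt hEpos)] at huvE
  rcases hcase with ⟨hsumV, h7v⟩ | ⟨hsumV, h7u⟩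
  · -- V1 : Q² = 5488u⁴ + v⁴ - 147u²v²,  E = uv, v odd, 7∤v
    rw [hsum] at hsumV
    have hQQ : Q^2 = 5488*u^4 + v^4 - 147*u^2*v^2 := by
      linear_combination hsumV + 147*(u*v + E)*huvE
    rcases Int.even_or_odd u with hueven | huodd
    · -- u even : second descent with halving
      obtain ⟨u1, hu1⟩ := hueven
      have hu1pos : 0 < u1 := by omega
      have hQodd : Odd Q := by
        rcases Int.even_or_odd Q with ⟨s, hs⟩ | hQo
        · exfalso
          obtain ⟨t, ht⟩ := hrodd
          have hK : Q^2 + 147*E^2 = 2*(2*s^2 + 294*(u1*v)^2) := by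
            rw [hs, ← huvE, hu1]; ring
          omega
        · exact hQo
      have hSodd : Odd (v^2 - 294*u1^2) := by
        obtain ⟨w, hw⟩ := hvodd
        exact ⟨2*w^2+2*w-147*u1^2, by rw [hw]; ring⟩
      have hfac2 : (Q - (v^2 - 294*u1^2)) * (Q + (v^2 - 294*u1^2)) = 4*(343*u1^4) := by
        rw [hu1] at hQQ; linear_combination hQQ
      obtain ⟨G1, hG1⟩ := hQodd.sub_odd hSodd
      obtain ⟨G2, hG2⟩ := hQodd.add_odd hSodd
      have hpos2 := both_pos (show 0 < (Q - (v^2-294*u1^2))*(Q + (v^2-294*u1^2)) by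
        rw [hfac2]; positivity) (by linarith)
      have hG1pos : 0 < G1 := by have := hpos2.1; rw [hG1] at this; linarith
      have hG2pos : 0 < G2 := by have := hpos2.2; rw [hG2] at this; linarith
      have hprod2 : G1 * G2 = 343*u1^4 := by
        apply mul_left_cancel₀ (show (4:ℤ) ≠ 0 by norm_num)
        rw [show (4:ℤ)*(G1*G2) = (G1+G1)*(G2+G2) by ring, ← hG1, ← hG2, hfac2]
      have hsum2 : G1 + G2 = Q := by linarith [hG1, hG2]
      have hdiff2 : G2 - G1 = v^2 - 294*u1^2 := by linarith [hG1, hG2]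
      have hcopG : IsCoprime G1 G2 := by
        apply isCoprime_of_no_prime
        intro p pp hp1 hp2
        have hpQ : (p:ℤ) ∣ Q := hsum2 ▸ dvd_add hp1 hp2
        have hpP : (p:ℤ) ∣ 343*u1^4 := hprod2 ▸ hp1.mul_right G2
        have hpint : Prime (p:ℤ) := Nat.prime_iff_prime_int.mp pp
        by_cases hp2' : p = 2
        · subst hp2'
          obtain ⟨k, hk'⟩ := hpQ
          obtain ⟨t, ht⟩ := hQodd
          omega
        rcases hpint.dvd_mul.1 hpP with h343 | hu4
        · have hp7 : p = 7 := prime_seven_of_dvd pp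
            (hpint.dvd_of_dvd_pow (show (p:ℤ) ∣ 7^3 by norm_num; exact_mod_cast h343))
          subst hp7; exact h7Q hpQ
        · have hpu1 : (p:ℤ) ∣ u1 := hpint.dvd_of_dvd_pow hu4
          obtain ⟨t, ht⟩ := hpu1
          have hpE : (p:ℤ) ∣ E := ⟨2*t*v, by rw [← huvE, hu1, ht]; ring⟩
          exact not_unit_prime pp (hcop.isUnit_of_dvd' hpQ hpE)
      obtain ⟨c, d, hc, hd, hcd, h7d, hcdu1, hcase2⟩ := split343 G1 G2 u1 hG1pos hG2pos hcopG hprod2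
      rw [Int.natAbs_of_nonneg (le_of_lt hu1pos)] at hcdu1
      rcases hcase2 with ⟨hA1, hA2⟩ | ⟨hA1, hA2⟩
      · -- G1 = 343c⁴, G2 = d⁴ :  v² = d⁴ + 294c²d² - 343c⁴  : recursion
        have hreq : v^2 = d^4 + 294*c^2*d^2 - 343*c^4 := by
          have h' : d^4 - 343*c^4 = v^2 - 294*u1^2 := by rw [← hA1, ← hA2]; exact hdiff2
          have hc2 : u1^2 = c^2*d^2 := by rw [← hcdu1]; ring
          linear_combination -h' + 294*hc2
        have hbound : c.natAbs ≤ K := by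
          have hEe : E = 2*(c*(d*v)) := by rw [← huvE, hu1, ← hcdu1]; ring
          have hdv1 : (1:ℤ) ≤ d*v := by simpa using Int.lt_iff_add_one_le.mp (mul_pos hd hv)
          have hcle : c ≤ c*(d*v) := le_mul_of_one_le_right hc.le hdv1
          have hclt : c < E := by rw [hEe]; linarith
          omega
        have := IH c d v hbound hcd.symm h7d hreq
        omega
      · -- G1 = d⁴, G2 = 343c⁴ :  v² = 294c²d² + 343c⁴ - d⁴  : dead mod 16
        have hreq : v^2 = 294*c^2*d^2 + 343*c^4 - d^4 := by
          have h' : 343*c^4 - d^4 = v^2 - 294*u1^2 := by rw [← hA1, ← hA2]; exact hdiff2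
          have hc2 : u1^2 = c^2*d^2 := by rw [← hcdu1]; ring
          linear_combination -h' + 294*hc2
        obtain ⟨w, hw⟩ := hvodd
        rcases Int.even_or_odd c with ⟨γ, hγ⟩ | ⟨γ, hγ⟩
        · -- c even → d odd (coprime)
          have hdodd : Odd d := by
            rcases Int.even_or_odd d with ⟨δ, hδ⟩ | hdo
            · exfalso
              exact not_unit_prime Nat.prime_two
                (hcd.isUnit_of_dvd' ⟨γ, by omega⟩ ⟨δ, by omega⟩)
            · exact hdo
          obtain ⟨δ, hδ⟩ := hdodd
          apply decV1c2 ((w:ℤ) : ZMod 16) ((c:ℤ) : ZMod 16) ((δ:ℤ) : ZMod 16)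
          have := congrArg (fun z : ℤ => (z : ZMod 16)) hreq
          rw [hw, hδ] at this
          push_cast at this ⊢
          linear_combination this
        · obtain rfl : c = 2*γ+1 := hγ
          apply decV1c1 ((w:ℤ) : ZMod 16) ((γ:ℤ) : ZMod 16) ((d:ℤ) : ZMod 16)
          have := congrArg (fun z : ℤ => (z : ZMod 16)) hreq
          rw [hw] at this
          push_cast at this ⊢
          linear_combination this
    · -- u odd
      have hWodd : Odd (2*v^2 - 147*u^2) := by
        obtain ⟨w, hw⟩ := huodd
        exact ⟨v^2 - 294*w^2 - 294*w - 74, by rw [hw]; ring⟩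
      have hfac2 : (2*Q - (2*v^2 - 147*u^2)) * (2*Q + (2*v^2 - 147*u^2)) = 343*u^4 := by
        linear_combination 4*hQQ
      have hpos2 := both_pos (show 0 < (2*Q - (2*v^2-147*u^2))*(2*Q + (2*v^2-147*u^2)) by
        rw [hfac2]; positivity) (by linarith)
      have hcopG : IsCoprime (2*Q - (2*v^2 - 147*u^2)) (2*Q + (2*v^2 - 147*u^2)) := by
        apply isCoprime_of_no_prime
        intro p pp hp1 hp2
        have hp4Q : (p:ℤ) ∣ 4*Q := by
          have := dvd_add hp1 hp2; simpa [show (2*Q - (2*v^2 - 147*u^2)) + (2*Q + (2*v^2 - 147*u^2)) = 4*Q by ring] using this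
        have hpW : (p:ℤ) ∣ 2*(2*v^2 - 147*u^2) := by
          have := dvd_sub hp2 hp1
          simpa [show (2*Q + (2*v^2 - 147*u^2)) - (2*Q - (2*v^2 - 147*u^2)) = 2*(2*v^2 - 147*u^2) by ring] using this
        have hpP : (p:ℤ) ∣ 343*u^4 := hfac2 ▸ hp1.mul_right _
        have hpint : Prime (p:ℤ) := Nat.prime_iff_prime_int.mp pp
        by_cases hp2' : p = 2
        · subst hp2'
          obtain ⟨k, hk'⟩ := hp1
          obtain ⟨t, ht⟩ := hWodd
          omega
        have hpQ : (p:ℤ) ∣ Q := by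
          rcases hpint.dvd_mul.1 hp4Q with h4 | hQd
          · exact absurd (prime_two_of_dvd_two pp
              (hpint.dvd_of_dvd_pow (show (p:ℤ) ∣ 2^2 by norm_num; exact_mod_cast h4))) hp2'
          · exact hQd
        rcases hpint.dvd_mul.1 hpP with h343 | hu4
        · have hp7 : p = 7 := prime_seven_of_dvd pp
            (hpint.dvd_of_dvd_pow (show (p:ℤ) ∣ 7^3 by norm_num; exact_mod_cast h343))
          subst hp7; exact h7Q hpQ
        · have hpu : (p:ℤ) ∣ u := hpint.dvd_of_dvd_pow hu4
          obtain ⟨t, ht⟩ := hpu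
          have hpE : (p:ℤ) ∣ E := ⟨t*v, by rw [← huvE, ht]; ring⟩
          exact not_unit_prime pp (hcop.isUnit_of_dvd' hpQ hpE)
      obtain ⟨c, d, hc, hd, hcd, h7d, hcdu, hcase2⟩ :=
        split343 _ _ u hpos2.1 hpos2.2 hcopG hfac2
      rw [Int.natAbs_of_nonneg (le_of_lt hu)] at hcdu
      have hcodd : Odd c ∧ Odd d := by
        rw [← hcdu] at huodd
        exact (Int.odd_mul.mp huodd)
      rcases hcase2 with ⟨hA1, hA2⟩ | ⟨hA1, hA2⟩
      · -- diff : d⁴ - 343c⁴ = 2W :  4v² = 294c²d² + d⁴ - 343c⁴ : recursion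
        have hreq : (2*v)^2 = d^4 + 294*c^2*d^2 - 343*c^4 := by
          have h' : d^4 - 343*c^4 = 2*(2*v^2 - 147*u^2) := by
            rw [← hA1, ← hA2]; ring
          have hc2 : u^2 = c^2*d^2 := by rw [← hcdu]; ring
          linear_combination -h' + 294*hc2
        by_cases hdv : d*v = 1
        · obtain ⟨hd1, hv1⟩ := Int.mul_eq_one_iff_eq_one_or_neg_one.mp hdv |>.resolve_right
            (fun ⟨h1, _⟩ => by omega)
          rw [hd1, hv1] at hreq
          have h73 : (7:ℤ) ∣ 3 := ⟨42*c^2 - 49*c^4, by linarith⟩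
          norm_num at h73
        · have hbound : c.natAbs ≤ K := by
            have hEe : E = c*(d*v) := by rw [← huvE, ← hcdu]; ring
            have hdv1 : (1:ℤ) ≤ d*v := by simpa using Int.lt_iff_add_one_le.mp (mul_pos hd hv)
            have hdv2 : (2:ℤ) ≤ d*v := by
              rcases lt_or_eq_of_le hdv1 with h1 | h1
              · exact Int.lt_iff_add_one_le.mp h1 |>.trans_eq' (by norm_num)
              · exact absurd h1.symm hdv
            have hcle : c*2 ≤ c*(d*v) := mul_le_mul_of_nonneg_left hdv2 hc.le
            have hclt : c < E := by rw [hEe]; linarith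
            omega
          have := IH c d (2*v) hbound hcd.symm h7d hreq
          omega
      · -- 4v² = 294c²d² + 343c⁴ - d⁴ : dead mod 16
        have hreq : 4*v^2 = 294*c^2*d^2 - d^4 + 343*c^4 := by
          have h' : 343*c^4 - d^4 = 2*(2*v^2 - 147*u^2) := by
            rw [← hA1, ← hA2]; ring
          have hc2 : u^2 = c^2*d^2 := by rw [← hcdu]; ring
          linear_combination -h' + 294*hc2
        obtain ⟨w, hw⟩ := hvodd
        obtain ⟨γ, hγ⟩ := hcodd.1
        obtain ⟨δ, hδ⟩ := hcodd.2
        apply decV1b ((w:ℤ) : ZMod 16) ((γ:ℤ) : ZMod 16) ((δ:ℤ) : ZMod 16)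
        have := congrArg (fun z : ℤ => (z : ZMod 16)) hreq
        rw [hw, hγ, hδ] at this
        push_cast at this ⊢
        linear_combination this
  · -- V2 : Q² = 16u⁴ + 343v⁴ - 147u²v²,  E = uv, v odd, 7∤u
    rw [hsum] at hsumV
    have hQQ : Q^2 = 16*u^4 + 343*v^4 - 147*u^2*v^2 := by
      linear_combination hsumV + 147*(u*v + E)*huvE
    have hWodd : Odd (32*u^2 - 147*v^2) := by
      obtain ⟨w, hw⟩ := hvodd
      exact ⟨16*u^2 - 294*w^2 - 294*w - 74, by rw [hw]; ring⟩
    have hfac2 : (8*Q - (32*u^2 - 147*v^2)) * (8*Q + (32*u^2 - 147*v^2)) = 343*v^4 := by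
      linear_combination 64*hQQ
    have hpos2 := both_pos (show 0 < (8*Q - (32*u^2-147*v^2))*(8*Q + (32*u^2-147*v^2)) by
      rw [hfac2]; positivity) (by linarith)
    have hcopG : IsCoprime (8*Q - (32*u^2 - 147*v^2)) (8*Q + (32*u^2 - 147*v^2)) := by
      apply isCoprime_of_no_prime
      intro p pp hp1 hp2
      have hp16Q : (p:ℤ) ∣ 16*Q := by
        have := dvd_add hp1 hp2
        simpa [show (8*Q - (32*u^2 - 147*v^2)) + (8*Q + (32*u^2 - 147*v^2)) = 16*Q by ring] using this
      have hpP : (p:ℤ) ∣ 343*v^4 := hfac2 ▸ hp1.mul_right _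
      have hpint : Prime (p:ℤ) := Nat.prime_iff_prime_int.mp pp
      by_cases hp2' : p = 2
      · subst hp2'
        obtain ⟨k, hk'⟩ := hp1
        obtain ⟨t, ht⟩ := hWodd
        omega
      have hpQ : (p:ℤ) ∣ Q := by
        rcases hpint.dvd_mul.1 hp16Q with h16 | hQd
        · exact absurd (prime_two_of_dvd_two pp
            (hpint.dvd_of_dvd_pow (show (p:ℤ) ∣ 2^4 by norm_num; exact_mod_cast h16))) hp2'
        · exact hQd
      rcases hpint.dvd_mul.1 hpP with h343 | hv4
      · have hp7 : p = 7 := prime_seven_of_dvd pp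
          (hpint.dvd_of_dvd_pow (show (p:ℤ) ∣ 7^3 by norm_num; exact_mod_cast h343))
        subst hp7; exact h7Q hpQ
      · have hpv : (p:ℤ) ∣ v := hpint.dvd_of_dvd_pow hv4
        obtain ⟨t, ht⟩ := hpv
        have hpE : (p:ℤ) ∣ E := ⟨u*t, by rw [← huvE, ht]; ring⟩
        exact not_unit_prime pp (hcop.isUnit_of_dvd' hpQ hpE)
    obtain ⟨c, d, hc, hd, hcd, h7d, hcdv, hcase2⟩ :=
      split343 _ _ v hpos2.1 hpos2.2 hcopG hfac2
    rw [Int.natAbs_of_nonneg (le_of_lt hv)] at hcdv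
    have hcodd : Odd c ∧ Odd d := by
      rw [← hcdv] at hvodd
      exact (Int.odd_mul.mp hvodd)
    rcases hcase2 with ⟨hA1, hA2⟩ | ⟨hA1, hA2⟩
    · -- d⁴ - 343c⁴ = 2W : 64u² = 294c²d² + d⁴ - 343c⁴ : recursion
      have hreq : (8*u)^2 = d^4 + 294*c^2*d^2 - 343*c^4 := by
        have h' : d^4 - 343*c^4 = 2*(32*u^2 - 147*v^2) := by
          rw [← hA1, ← hA2]; ring
        have hc2 : v^2 = c^2*d^2 := by rw [← hcdv]; ring
        linear_combination -h' + 294*hc2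
      by_cases hud : u*d = 1
      · obtain ⟨hu1, hd1⟩ := Int.mul_eq_one_iff_eq_one_or_neg_one.mp hud |>.resolve_right
            (fun ⟨h1, _⟩ => by omega)
        rw [hu1, hd1] at hreq
        have hsq : (7*(7*c^2 - 3)^2 : ℤ) = 0 := by linarith
        have hsq2 : (7*c^2 - 3 : ℤ) = 0 := by
          have := pow_eq_zero_iff (n := 2) (by norm_num) |>.1 (by linarith : (7*c^2-3:ℤ)^2 = 0)
          exact this
        have h73 : (7:ℤ) ∣ 3 := ⟨c^2, by linarith⟩
        norm_num at h73
      · have hbound : c.natAbs ≤ K := by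
          have hEe : E = c*(u*d) := by rw [← huvE, ← hcdv]; ring
          have hud1 : (1:ℤ) ≤ u*d := by simpa using Int.lt_iff_add_one_le.mp (mul_pos hu hd)
          have hud2 : (2:ℤ) ≤ u*d := by
            rcases lt_or_eq_of_le hud1 with h1 | h1
            · exact Int.lt_iff_add_one_le.mp h1 |>.trans_eq' (by norm_num)
            · exact absurd h1.symm hud
          have hcle : c*2 ≤ c*(u*d) := mul_le_mul_of_nonneg_left hud2 hc.le
          have hclt : c < E := by rw [hEe]; linarith
          omega
        have := IH c d (8*u) hbound hcd.symm h7d hreq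
        omega
    · -- 64u² = 294c²d² + 343c⁴ - d⁴ : dead mod 16
      have hreq : 64*u^2 = 294*c^2*d^2 + 343*c^4 - d^4 := by
        have h' : 343*c^4 - d^4 = 2*(32*u^2 - 147*v^2) := by
          rw [← hA1, ← hA2]; ring
        have hc2 : v^2 = c^2*d^2 := by rw [← hcdv]; ring
        linear_combination -h' + 294*hc2
      obtain ⟨γ, hγ⟩ := hcodd.1
      obtain ⟨δ, hδ⟩ := hcodd.2
      apply decV2a ((u:ℤ) : ZMod 16) ((γ:ℤ) : ZMod 16) ((δ:ℤ) : ZMod 16)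
      have := congrArg (fun z : ℤ => (z : ZMod 16)) hreq
      rw [hγ, hδ] at this
      push_cast at this ⊢
      linear_combination this




lemma abs4 (x : ℤ) : |x|^4 = x^4 := by
  rw [pow_abs]; exact abs_of_nonneg (by positivity)

lemma isCoprime_abs {a b : ℤ} (h : IsCoprime a b) : IsCoprime |a| |b| := by
  rcases abs_choice a with h1|h1 <;> rcases abs_choice b with h2|h2 <;> rw [h1, h2]
  exacts [h, h.neg_right, h.neg_left, h.neg_left.neg_right]

lemma main_descent : ∀ (k : ℕ) (e q n : ℤ), e.natAbs ≤ k → IsCoprime q e → ¬ (7:ℤ) ∣ q →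
    n^2 = q^4 + 294*e^2*q^2 - 343*e^4 → e = 0 := by
  intro k
  induction k with
  | zero => intro e q n hk _ _ _; exact Int.natAbs_eq_zero.mp (Nat.le_zero.mp hk)
  | succ K IH =>
    intro e q n hk hcop h7 heq
    by_contra he
    have hq0 : q ≠ 0 := fun h0 => h7 (by rw [h0]; exact dvd_zero 7)
    have hEpos : 0 < |e| := abs_pos.2 he
    have hQpos : 0 < |q| := abs_pos.2 hq0
    have heqN : |n|^2 = |q|^4 + 294*|e|^2*|q|^2 - 343*|e|^4 := by
      rw [sq_abs, abs4, abs4, sq_abs, sq_abs]; exact heq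
    have hcopN : IsCoprime |q| |e| := isCoprime_abs hcop
    have h7N : ¬ (7:ℤ) ∣ |q| := by
      intro hd
      rcases abs_choice q with h1|h1
      · exact h7 (h1 ▸ hd)
      · exact h7 (by have := h1 ▸ hd; exact (dvd_neg).1 this)
    have hkN : |e|.natAbs ≤ K + 1 := by rw [Int.natAbs_abs]; exact hk
    rcases Int.even_or_odd |q| with hQe | hQo <;> rcases Int.even_or_odd |e| with hEe | hEo
    · exact not_unit_prime Nat.prime_two (hcopN.isUnit_of_dvd' hQe.two_dvd hEe.two_dvd)
    · -- Q even, E odd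
      obtain ⟨s, hs⟩ := hQe
      obtain ⟨b, hb⟩ := hEo
      have hrodd : Odd (|q|^2 + 147*|e|^2) :=
        ⟨2*s^2 + 294*b^2 + 294*b + 73, by rw [hs, hb]; ring⟩
      have hNodd : Odd |n| := by
        have hsq : |n|^2 = 2*(8*s^4 + 588*(2*b+1)^2*s^2
            - 2744*b^4 - 5488*b^3 - 4116*b^2 - 1372*b - 172) + 1 := by
          rw [heqN, hs, hb]; ring
        rcases Int.even_or_odd |n| with ⟨t, ht⟩ | hno
        · exact absurd ⟨_, hsq⟩ (Int.not_odd_iff_even.mpr ⟨2*t^2, by rw [ht]; ring⟩)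
        · exact hno
      exact regimeI K IH |e| |q| |n| hEpos hQpos (abs_nonneg n) hkN hcopN h7N hrodd hNodd heqN
    · -- Q odd, E even
      obtain ⟨a, ha⟩ := hQo
      obtain ⟨t, ht⟩ := hEe
      have hrodd : Odd (|q|^2 + 147*|e|^2) :=
        ⟨2*a^2 + 2*a + 294*t^2, by rw [ha, ht]; ring⟩
      have hNodd : Odd |n| := by
        have hsq : |n|^2 = 2*(8*a^4 + 16*a^3 + 12*a^2 + 4*a
            + 588*t^2*(2*a+1)^2 - 2744*t^4) + 1 := by
          rw [heqN, ha, ht]; ring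
        rcases Int.even_or_odd |n| with ⟨w, hw⟩ | hno
        · exact absurd ⟨_, hsq⟩ (Int.not_odd_iff_even.mpr ⟨2*w^2, by rw [hw]; ring⟩)
        · exact hno
      exact regimeI K IH |e| |q| |n| hEpos hQpos (abs_nonneg n) hkN hcopN h7N hrodd hNodd heqN
    · exact regimeII |e| |q| |n| hQo hEo heqN

lemma L1 (p q m : ℤ) (hcop : IsCoprime p q)
    (h : m^2 = -7*p^4 + 294*p^2*q^2 + 49*q^4) : p = 0 := by
  have h7 : Prime (7:ℤ) := by norm_num
  have h7m : (7:ℤ) ∣ m :=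
    h7.dvd_of_dvd_pow (n := 2) ⟨-p^4 + 42*p^2*q^2 + 7*q^4, by linear_combination h⟩
  obtain ⟨m1, rfl⟩ := h7m
  have h1 : 7*m1^2 = -p^4 + 42*p^2*q^2 + 7*q^4 := by
    apply mul_left_cancel₀ (show (7:ℤ) ≠ 0 by norm_num); linear_combination h
  have h7p : (7:ℤ) ∣ p :=
    h7.dvd_of_dvd_pow (n := 4) ⟨6*p^2*q^2 + q^4 - m1^2, by linarith⟩
  obtain ⟨e, rfl⟩ := h7p
  have hq7 : ¬ (7:ℤ) ∣ q :=
    notdvd_of_coprime 7 (by norm_num [Int.isUnit_iff]) hcop ⟨e, rfl⟩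
  have heq : m1^2 = q^4 + 294*e^2*q^2 - 343*e^4 := by
    apply mul_left_cancel₀ (show (49:ℤ) ≠ 0 by norm_num); linear_combination h
  have hcop' : IsCoprime q e := (hcop.of_isCoprime_of_dvd_left ⟨7, by ring⟩).symm
  have he0 := main_descent e.natAbs e q m1 le_rfl hcop' hq7 heq
  rw [he0, mul_zero]


/-- The only rational points of (the smooth projective model of) the genus-1 curve
`y² = −7(x⁴ − 10x³ + 27x² − 10x − 27)` are `(5/2, 7/4)` and `(5/2, −7/4)`.  (The two points at
infinity of the smooth projective model are defined over `ℚ(√−7)` and are not rational, so the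
rational points are exactly the affine solutions.) -/
theorem Xd7_rational_points :
    {P : ℚ × ℚ | P.2 ^ 2 = -7 * (P.1 ^ 4 - 10 * P.1 ^ 3 + 27 * P.1 ^ 2 - 10 * P.1 - 27)} =
      {(5/2, 7/4), (5/2, -7/4)} := by
  ext P
  obtain ⟨x, y⟩ := P
  simp only [Set.mem_setOf_eq, Set.mem_insert_iff, Set.mem_singleton_iff, Prod.mk.injEq]
  constructor
  · intro h
    set s : ℚ := 2*x - 5 with hsdef
    have h4 : (4*y)^2 = -7*s^4 + 294*s^2 + 49 := by
      rw [hsdef]; linear_combination 16*h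
    have hnum : (s.num : ℚ) = s * (s.den : ℚ) := by
      have hd : ((s.den : ℚ)) ≠ 0 := Nat.cast_ne_zero.2 s.den_ne_zero
      exact (div_eq_iff hd).mp (Rat.num_div_den s)
    have hm2 : (4*y*(s.den:ℚ)^2)^2
        = ((-7*s.num^4 + 294*s.num^2*((s.den:ℤ))^2 + 49*((s.den:ℤ))^4 : ℤ) : ℚ) := by
      push_cast
      rw [hnum]
      linear_combination ((s.den:ℚ))^4 * h4
    set m : ℚ := 4*y*(s.den:ℚ)^2 with hmdef
    have hden2 : (m^2).den = 1 := by rw [hm2]; exact Rat.den_intCast _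
    have hmden : m.den = 1 := by
      rw [Rat.den_pow] at hden2
      exact (pow_eq_one_iff.mp hden2).resolve_right (by norm_num)
    have hmint : m = (m.num : ℚ) := by
      conv_lhs => rw [← Rat.num_div_den m]
      rw [hmden]; simp
    have hZ : (m.num)^2 = -7*s.num^4 + 294*s.num^2*((s.den:ℤ))^2 + 49*((s.den:ℤ))^4 := by
      have h' := hm2
      rw [hmint] at h'
      exact_mod_cast h'
    have hcop : IsCoprime s.num ((s.den : ℤ)) := by
      rw [Int.isCoprime_iff_gcd_eq_one]
      simpa [Int.gcd] using s.reduced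
    have hp0 : s.num = 0 := L1 s.num ((s.den:ℤ)) m.num hcop hZ
    have hs0 : s = 0 := by
      rw [← Rat.num_div_den s, hp0]; simp
    have hx : x = 5/2 := by
      rw [hsdef] at hs0; linarith
    have hy : (y - 7/4)*(y + 7/4) = 0 := by
      rw [hx] at h; linear_combination h
    rcases mul_eq_zero.mp hy with h1 | h1
    · exact Or.inl ⟨hx, by linarith⟩
    · exact Or.inr ⟨hx, by linarith⟩
  · rintro (⟨hx, hy⟩ | ⟨hx, hy⟩) <;> subst hx <;> subst hy <;> norm_num
end

section
/- Let C be the smooth projective genus-1 curve over ℚ with affine model y² = 7(16x⁴ + 68x³ + 111x² + 62x + 11). Then the only rational points of C are (−1/3, 14/9) and (−1/3, −14/9). -/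
namespace Xe7

/-- Squares mod 8. -/
lemma sq8 (v : ℤ) : ∃ k, v ^ 2 = 8 * k ∨ v ^ 2 = 8 * k + 1 ∨ v ^ 2 = 8 * k + 4 := by
  rcases Int.even_or_odd v with ⟨c, hc⟩ | ⟨c, hc⟩
  · rcases Int.even_or_odd c with ⟨d, hd⟩ | ⟨d, hd⟩
    · exact ⟨2 * d ^ 2, Or.inl (by subst hc hd; ring)⟩
    · exact ⟨2 * d ^ 2 + 2 * d, Or.inr (Or.inr (by subst hc hd; ring))⟩
  · obtain ⟨t, ht⟩ := Int.even_mul_succ_self c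
    exact ⟨t, Or.inr (Or.inl (by subst hc; linear_combination 4 * ht))⟩

lemma odd_sq8 {e : ℤ} (he : Odd e) : ∃ p, e ^ 2 = 8 * p + 1 := by
  obtain ⟨c, hc⟩ := he
  obtain ⟨t, ht⟩ := Int.even_mul_succ_self c
  exact ⟨t, by subst hc; linear_combination 4 * ht⟩

/-- key congruence: for odd `e, f`, `f⁴ + 294e²f² − 343e⁴ ≡ 80 (mod 128)`. -/
lemma rhs128 {e f : ℤ} (he : Odd e) (hf : Odd f) :
    ∃ k, f ^ 4 + 294 * e ^ 2 * f ^ 2 - 343 * e ^ 4 = 128 * k + 80 := by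
  obtain ⟨p, hp⟩ := odd_sq8 he
  obtain ⟨q, hq⟩ := odd_sq8 hf
  obtain ⟨P, hP⟩ : Even (p ^ 2 + p) := by
    rcases Int.even_or_odd p with ⟨c, hc⟩ | ⟨c, hc⟩
    · exact ⟨2 * c ^ 2 + c, by subst hc; ring⟩
    · exact ⟨2 * c ^ 2 + 3 * c + 1, by subst hc; ring⟩
  obtain ⟨Q, hQ⟩ : Even (q ^ 2 + q) := by
    rcases Int.even_or_odd q with ⟨c, hc⟩ | ⟨c, hc⟩
    · exact ⟨2 * c ^ 2 + c, by subst hc; ring⟩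
    · exact ⟨2 * c ^ 2 + 3 * c + 1, by subst hc; ring⟩
  refine ⟨Q + 147 * p * q - 147 * p ^ 2 - 49 * P + 18 * q - 1, ?_⟩
  linear_combination (f ^ 2 + 8 * q + 1) * hq + 294 * (8 * p + 1) * hq +
    (294 * f ^ 2 - 343 * (e ^ 2 + 8 * p + 1)) * hp + 64 * hQ - 3136 * hP

/-- key congruence: for odd `e, f`, `343e⁴ + 294e²f² − f⁴ ≡ 12 (mod 16)`. -/
lemma rhs16 {e f : ℤ} (he : Odd e) (hf : Odd f) :
    ∃ k, 343 * e ^ 4 + 294 * e ^ 2 * f ^ 2 - f ^ 4 = 16 * k + 12 := by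
  obtain ⟨p, hp⟩ := odd_sq8 he
  obtain ⟨q, hq⟩ := odd_sq8 hf
  refine ⟨1372 * p ^ 2 + 1176 * p * q - 4 * q ^ 2 + 490 * p + 146 * q + 39, ?_⟩
  linear_combination (343 * (e ^ 2 + 8 * p + 1) + 294 * f ^ 2) * hp +
    (294 * (8 * p + 1) - (f ^ 2 + 8 * q + 1)) * hq

lemma no16 {v k : ℤ} (h : 16 * v ^ 2 = 128 * k + 80) : False := by
  rcases sq8 v with ⟨j, hj | hj | hj⟩ <;> rw [hj] at h <;> omega

lemma no4 {w k : ℤ} (h : 4 * w ^ 2 = 128 * k + 80) : False := by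
  rcases Int.even_or_odd w with ⟨c, hc⟩ | hw
  · have h' : 16 * c ^ 2 = 128 * k + 80 := by subst hc; linear_combination h
    exact no16 h'
  · obtain ⟨p, hp⟩ := odd_sq8 hw
    rw [hp] at h; omega

lemma no4b {w k : ℤ} (h : 4 * w ^ 2 = 16 * k + 12) : False := by
  rcases sq8 w with ⟨j, hj | hj | hj⟩ <;> rw [hj] at h <;> omega

lemma no8 {w k : ℤ} (h : w ^ 2 = 8 * k + 7) : False := by
  rcases sq8 w with ⟨j, hj | hj | hj⟩ <;> rw [hj] at h <;> omega

/-- C5: `343e⁴ + 294e²f² − f⁴ ≡ 7 (mod 8)` when exactly one of `e, f` is even. -/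
lemma c5 {e f : ℤ} (h : Odd (e + f)) : ∃ k, 343 * e ^ 4 + 294 * e ^ 2 * f ^ 2 - f ^ 4 = 8 * k + 7 := by
  rcases Int.even_or_odd e with ⟨c, hc⟩ | he
  · have hf : Odd f := by
      rcases Int.even_or_odd f with ⟨d, hd⟩ | hf
      · exfalso; rcases h with ⟨t, ht⟩; omega
      · exact hf
    obtain ⟨q, hq⟩ := odd_sq8 hf
    subst hc
    refine ⟨686 * c ^ 4 + 1176 * c ^ 2 * q + 147 * c ^ 2 - 8 * q ^ 2 - 2 * q - 1, ?_⟩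
    linear_combination (1176 * c ^ 2 - f ^ 2 - 8 * q - 1) * hq
  · have hf : Even f := by
      rcases Int.even_or_odd f with hf | hf
      · exact hf
      · exfalso; rcases h with ⟨t, ht⟩; rcases he with ⟨c2, hc2⟩; rcases hf with ⟨d, hd⟩; omega
    obtain ⟨d, hd⟩ := hf
    obtain ⟨p, hp⟩ := odd_sq8 he
    subst hd
    refine ⟨2744 * p ^ 2 + 686 * p + 42 + 1176 * p * d ^ 2 + 147 * d ^ 2 - 2 * d ^ 4, ?_⟩
    linear_combination (343 * (e ^ 2 + 8 * p + 1) + 1176 * d ^ 2) * hp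


lemma isCoprime_of_prime {a b : ℤ} (h : ∀ p : ℤ, Prime p → p ∣ a → p ∣ b → False) :
    IsCoprime a b := by
  rw [Int.isCoprime_iff_gcd_eq_one]
  by_contra hg
  obtain ⟨p, hp, hpd⟩ := Int.exists_prime_and_dvd (n := (Int.gcd a b : ℤ)) (by simpa using hg)
  exact h p hp (hpd.trans (Int.gcd_dvd_left a b)) (hpd.trans (Int.gcd_dvd_right a b))

/-- an (odd) prime dividing an odd number and `2*b` divides `b`. -/
lemma odd_prime_dvd {p a b : ℤ} (hp : Prime p) (ha : Odd a) (h1 : p ∣ a) (h2 : p ∣ 2 * b) :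
    p ∣ b := by
  rcases hp.2.2 2 b h2 with h | h
  · exfalso
    have hnp : p.natAbs.Prime := Int.prime_iff_natAbs_prime.mp hp
    have h2' : p.natAbs ∣ 2 := by
      have := Int.natAbs_dvd_natAbs.mpr h; simpa using this
    have hp2 : p.natAbs = 2 := (Nat.prime_dvd_prime_iff_eq hnp Nat.prime_two).mp h2'
    have h2p : (2 : ℤ) ∣ p := by
      rcases Int.natAbs_eq p with he | he
      · rw [he, hp2]; norm_num
      · rw [he, hp2]; exact ⟨-1, by ring⟩

    have : (2 : ℤ) ∣ a := h2p.trans h1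
    exact (Int.not_even_iff_odd.mpr ha) ((even_iff_two_dvd).mpr this)
  · exact h

lemma seven_prime : Prime (7 : ℤ) := by norm_num

lemma not_unit7 : ¬ IsUnit (7 : ℤ) := by
  rw [Int.isUnit_iff]; norm_num

/-- 7-adic contradiction for the H-form. -/
lemma sevenH {Z v m : ℤ} (hc : IsCoprime v m)
    (h : Z ^ 2 = 4 * v ^ 4 - 147 * v ^ 2 * m ^ 2 + 1372 * m ^ 4) (h7 : (7 : ℤ) ∣ v) : False := by
  obtain ⟨v1, rfl⟩ := h7
  have hZ : (7 : ℤ) ∣ Z := by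
    have : (7:ℤ) ∣ Z ^ 2 := ⟨1372 * v1 ^ 4 - 1029 * v1 ^ 2 * m ^ 2 + 196 * m ^ 4, by linear_combination h⟩
    exact seven_prime.dvd_of_dvd_pow this
  obtain ⟨Z1, rfl⟩ := hZ
  have h1 : Z1 ^ 2 = 196 * v1 ^ 4 - 147 * v1 ^ 2 * m ^ 2 + 28 * m ^ 4 := by
    have h49 : (49 : ℤ) * Z1 ^ 2 = 49 * (196 * v1 ^ 4 - 147 * v1 ^ 2 * m ^ 2 + 28 * m ^ 4) := by
      linear_combination h
    exact mul_left_cancel₀ (by norm_num) h49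
  have hZ1 : (7 : ℤ) ∣ Z1 := by
    have : (7:ℤ) ∣ Z1 ^ 2 := ⟨28 * v1 ^ 4 - 21 * v1 ^ 2 * m ^ 2 + 4 * m ^ 4, by linear_combination h1⟩
    exact seven_prime.dvd_of_dvd_pow this
  obtain ⟨Z2, rfl⟩ := hZ1
  have h2 : 7 * Z2 ^ 2 = 28 * v1 ^ 4 - 21 * v1 ^ 2 * m ^ 2 + 4 * m ^ 4 := by
    have h7' : (7 : ℤ) * (7 * Z2 ^ 2) = 7 * (28 * v1 ^ 4 - 21 * v1 ^ 2 * m ^ 2 + 4 * m ^ 4) := by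
      linear_combination h1
    exact mul_left_cancel₀ (by norm_num) h7'
  have h7m : (7 : ℤ) ∣ m := by
    have hd : (7:ℤ) ∣ 4 * m ^ 4 := ⟨Z2 ^ 2 - 4 * v1 ^ 4 + 3 * v1 ^ 2 * m ^ 2, by linear_combination -h2⟩
    rcases seven_prime.2.2 4 (m ^ 4) hd with h' | h'
    · exfalso; rcases h' with ⟨c, hc'⟩; omega
    · exact seven_prime.dvd_of_dvd_pow h'
  exact not_unit7 (hc.isUnit_of_dvd' ⟨v1, by ring⟩ h7m)

/-- 7-adic contradiction for the G-form. -/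
lemma sevenG {Z w m : ℤ} (hc : IsCoprime w m)
    (h : Z ^ 2 = w ^ 4 - 147 * w ^ 2 * m ^ 2 + 5488 * m ^ 4) (h7 : (7 : ℤ) ∣ w) : False := by
  obtain ⟨w1, rfl⟩ := h7
  have hZ : (7 : ℤ) ∣ Z := by
    have : (7:ℤ) ∣ Z ^ 2 := ⟨343 * w1 ^ 4 - 1029 * w1 ^ 2 * m ^ 2 + 784 * m ^ 4, by linear_combination h⟩
    exact seven_prime.dvd_of_dvd_pow this
  obtain ⟨Z1, rfl⟩ := hZ
  have h1 : Z1 ^ 2 = 49 * w1 ^ 4 - 147 * w1 ^ 2 * m ^ 2 + 112 * m ^ 4 := by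
    have h49 : (49 : ℤ) * Z1 ^ 2 = 49 * (49 * w1 ^ 4 - 147 * w1 ^ 2 * m ^ 2 + 112 * m ^ 4) := by
      linear_combination h
    exact mul_left_cancel₀ (by norm_num) h49
  have hZ1 : (7 : ℤ) ∣ Z1 := by
    have : (7:ℤ) ∣ Z1 ^ 2 := ⟨7 * w1 ^ 4 - 21 * w1 ^ 2 * m ^ 2 + 16 * m ^ 4, by linear_combination h1⟩
    exact seven_prime.dvd_of_dvd_pow this
  obtain ⟨Z2, rfl⟩ := hZ1
  have h2 : 7 * Z2 ^ 2 = 7 * w1 ^ 4 - 21 * w1 ^ 2 * m ^ 2 + 16 * m ^ 4 := by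
    have h7' : (7 : ℤ) * (7 * Z2 ^ 2) = 7 * (7 * w1 ^ 4 - 21 * w1 ^ 2 * m ^ 2 + 16 * m ^ 4) := by
      linear_combination h1
    exact mul_left_cancel₀ (by norm_num) h7'
  have h7m : (7 : ℤ) ∣ m := by
    have hd : (7:ℤ) ∣ 16 * m ^ 4 := ⟨Z2 ^ 2 - w1 ^ 4 + 3 * w1 ^ 2 * m ^ 2, by linear_combination -h2⟩
    rcases seven_prime.2.2 16 (m ^ 4) hd with h' | h'
    · exfalso; rcases h' with ⟨c, hc'⟩; omega
    · exact seven_prime.dvd_of_dvd_pow h'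
  exact not_unit7 (hc.isUnit_of_dvd' ⟨w1, by ring⟩ h7m)

/-- 7-adic contradiction for the D-form. -/
lemma sevenD {y t s : ℤ} (hc : IsCoprime t s)
    (h : y ^ 2 = t ^ 4 + 294 * t ^ 2 * s ^ 2 - 343 * s ^ 4) (h7 : (7 : ℤ) ∣ t) : False := by
  obtain ⟨t1, rfl⟩ := h7
  have hZ : (7 : ℤ) ∣ y := by
    have : (7:ℤ) ∣ y ^ 2 := ⟨343 * t1 ^ 4 + 2058 * t1 ^ 2 * s ^ 2 - 49 * s ^ 4, by linear_combination h⟩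
    exact seven_prime.dvd_of_dvd_pow this
  obtain ⟨y1, rfl⟩ := hZ
  have h1 : y1 ^ 2 = 49 * t1 ^ 4 + 294 * t1 ^ 2 * s ^ 2 - 7 * s ^ 4 := by
    have h49 : (49 : ℤ) * y1 ^ 2 = 49 * (49 * t1 ^ 4 + 294 * t1 ^ 2 * s ^ 2 - 7 * s ^ 4) := by
      linear_combination h
    exact mul_left_cancel₀ (by norm_num) h49
  have hZ1 : (7 : ℤ) ∣ y1 := by
    have : (7:ℤ) ∣ y1 ^ 2 := ⟨7 * t1 ^ 4 + 42 * t1 ^ 2 * s ^ 2 - s ^ 4, by linear_combination h1⟩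
    exact seven_prime.dvd_of_dvd_pow this
  obtain ⟨y2, rfl⟩ := hZ1
  have h2 : 7 * y2 ^ 2 = 7 * t1 ^ 4 + 42 * t1 ^ 2 * s ^ 2 - s ^ 4 := by
    have h7' : (7 : ℤ) * (7 * y2 ^ 2) = 7 * (7 * t1 ^ 4 + 42 * t1 ^ 2 * s ^ 2 - s ^ 4) := by
      linear_combination h1
    exact mul_left_cancel₀ (by norm_num) h7'
  have h7s : (7 : ℤ) ∣ s := by
    have hd : (7:ℤ) ∣ s ^ 4 := ⟨t1 ^ 4 + 6 * t1 ^ 2 * s ^ 2 - y2 ^ 2, by linear_combination h2⟩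
    exact seven_prime.dvd_of_dvd_pow hd
  exact not_unit7 (hc.isUnit_of_dvd' ⟨t1, by ring⟩ h7s)

/-- splitting a coprime factorization of `343·m⁴`, positive case with `7 ∣ X`. -/
lemma split343aux {X Y m : ℤ} (hm : m ≠ 0) (hX : 0 < X) (hY : 0 < Y) (hc : IsCoprime X Y)
    (h : X * Y = 343 * m ^ 4) (h7 : (7 : ℤ) ∣ X) :
    ∃ e f : ℤ, IsCoprime e f ∧ (e * f = m ∨ e * f = -m) ∧ X = 343 * e ^ 4 ∧ Y = f ^ 4 := by
  have h7Y : ¬ (7 : ℤ) ∣ Y := fun hd => not_unit7 (hc.isUnit_of_dvd' h7 hd)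
  obtain ⟨X1, rfl⟩ := h7
  have h1 : X1 * Y = 49 * m ^ 4 :=
    mul_left_cancel₀ (show (7:ℤ) ≠ 0 by norm_num) (by linear_combination h)
  have h7X1 : (7 : ℤ) ∣ X1 := by
    rcases seven_prime.2.2 X1 Y ⟨7 * m ^ 4, by linear_combination h1⟩ with h' | h'
    · exact h'
    · exact absurd h' h7Y
  obtain ⟨X2, rfl⟩ := h7X1
  have h2 : X2 * Y = 7 * m ^ 4 :=
    mul_left_cancel₀ (show (7:ℤ) ≠ 0 by norm_num) (by linear_combination h1)
  have h7X2 : (7 : ℤ) ∣ X2 := by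
    rcases seven_prime.2.2 X2 Y ⟨m ^ 4, by linear_combination h2⟩ with h' | h'
    · exact h'
    · exact absurd h' h7Y
  obtain ⟨X3, rfl⟩ := h7X2
  have h3 : X3 * Y = m ^ 4 :=
    mul_left_cancel₀ (show (7:ℤ) ≠ 0 by norm_num) (by linear_combination h2)
  have hX3pos : 0 < X3 := by nlinarith
  have hcop3 : IsCoprime X3 Y := hc.of_isCoprime_of_dvd_left ⟨343, by ring⟩
  -- first squares
  obtain ⟨r, hr⟩ := Int.sq_of_isCoprime hcop3 (c := m ^ 2) (by linear_combination h3)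
  have hr' : X3 = r ^ 2 := by
    rcases hr with h' | h'
    · exact h'
    · exfalso; nlinarith [sq_nonneg r]
  obtain ⟨w, hw⟩ := Int.sq_of_isCoprime hcop3.symm (c := m ^ 2) (by linear_combination h3)
  have hw' : Y = w ^ 2 := by
    rcases hw with h' | h'
    · exact h'
    · exfalso; nlinarith [sq_nonneg w]
  -- |r|, |w|
  set g := |r| with hg
  set k := |w| with hk
  have hg2 : X3 = g ^ 2 := by rw [hg, sq_abs]; exact hr'
  have hk2 : Y = k ^ 2 := by rw [hk, sq_abs]; exact hw'
  have hgk : g * k = m ^ 2 := by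
    have h4 : (g * k) ^ 2 = (m ^ 2) ^ 2 := by
      have : g ^ 2 * k ^ 2 = m ^ 4 := by rw [← hg2, ← hk2]; exact h3
      linear_combination this
    have h5 : (g * k - m ^ 2) * (g * k + m ^ 2) = 0 := by linear_combination h4
    rcases mul_eq_zero.mp h5 with h' | h'
    · linarith
    · have hgk0 : 0 ≤ g * k := mul_nonneg (abs_nonneg r) (abs_nonneg w)
      have hm2 : 0 < m ^ 2 := by positivity
      linarith
  have hcopgk : IsCoprime g k := by
    have h6 : IsCoprime (g ^ 2) (k ^ 2) := by rw [← hg2, ← hk2]; exact hcop3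
    exact (IsCoprime.pow_left_iff (by norm_num)).mp ((IsCoprime.pow_right_iff (by norm_num)).mp h6)
  obtain ⟨e, he⟩ := Int.sq_of_isCoprime hcopgk (c := m) (by linear_combination hgk)
  have hgne : g ≠ 0 := by
    intro h0
    rw [h0] at hg2; simp at hg2; rw [hg2] at hX3pos; exact lt_irrefl 0 hX3pos
  have hgpos : 0 < g := lt_of_le_of_ne (abs_nonneg r) (Ne.symm hgne)
  have he' : g = e ^ 2 := by
    rcases he with h' | h'
    · exact h'
    · exfalso; nlinarith [sq_nonneg e]
  obtain ⟨f, hf⟩ := Int.sq_of_isCoprime hcopgk.symm (c := m) (by linear_combination hgk)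
  have hkne : k ≠ 0 := by
    intro h0
    rw [h0] at hk2; simp at hk2; rw [hk2] at hY; exact lt_irrefl 0 hY
  have hkpos : 0 < k := lt_of_le_of_ne (abs_nonneg w) (Ne.symm hkne)
  have hf' : k = f ^ 2 := by
    rcases hf with h' | h'
    · exact h'
    · exfalso; nlinarith [sq_nonneg f]
  refine ⟨e, f, ?_, ?_, ?_, ?_⟩
  · have h6 : IsCoprime (e ^ 2) (f ^ 2) := by rw [← he', ← hf']; exact hcopgk
    exact (IsCoprime.pow_left_iff (by norm_num)).mp ((IsCoprime.pow_right_iff (by norm_num)).mp h6)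
  · have h7' : (e * f) ^ 2 = m ^ 2 := by
      have : e ^ 2 * f ^ 2 = m ^ 2 := by rw [← he', ← hf']; exact hgk
      linear_combination this
    have h8 : (e * f - m) * (e * f + m) = 0 := by linear_combination h7'
    rcases mul_eq_zero.mp h8 with h' | h'
    · left; linarith
    · right; linarith
  · rw [he'] at hg2; rw [hg2]; ring
  · rw [hf'] at hk2; rw [hk2]; ring

lemma split343 {X Y m : ℤ} (hm : m ≠ 0) (hX : 0 < X) (hY : 0 < Y) (hc : IsCoprime X Y)
    (h : X * Y = 343 * m ^ 4) :
    ∃ e f : ℤ, IsCoprime e f ∧ (e * f = m ∨ e * f = -m) ∧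
      ((X = 343 * e ^ 4 ∧ Y = f ^ 4) ∨ (X = f ^ 4 ∧ Y = 343 * e ^ 4)) := by
  have h7 : (7 : ℤ) ∣ X * Y := ⟨49 * m ^ 4, by linear_combination h⟩
  rcases seven_prime.2.2 X Y h7 with h7X | h7Y
  · obtain ⟨e, f, h1, h2, h3, h4⟩ := split343aux hm hX hY hc h h7X
    exact ⟨e, f, h1, h2, Or.inl ⟨h3, h4⟩⟩
  · obtain ⟨e, f, h1, h2, h3, h4⟩ := split343aux hm hY hX hc.symm (by linear_combination h) h7Y
    exact ⟨e, f, h1, h2, Or.inr ⟨h4, h3⟩⟩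


lemma prime_dvd_seven {p : ℤ} (hp : Prime p) (h : p ∣ 7) {c : ℤ} (hpc : p ∣ c) : (7:ℤ) ∣ c := by
  have hnp : p.natAbs.Prime := Int.prime_iff_natAbs_prime.mp hp
  have h7' : p.natAbs ∣ 7 := by
    have := Int.natAbs_dvd_natAbs.mpr h; simpa using this
  have hp7 : p.natAbs = 7 := (Nat.prime_dvd_prime_iff_eq hnp (by norm_num)).mp h7'
  have h7p : (7 : ℤ) ∣ p := by
    rcases Int.natAbs_eq p with he | he
    · rw [he, hp7]; norm_num
    · rw [he, hp7]; exact ⟨-1, by ring⟩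
  exact h7p.trans hpc

/-- Descent step for the D-form. -/
lemma descD {y t s : ℤ} (hc : IsCoprime t s) (hpar : Odd (t + s)) (hs : s ≠ 0)
    (h : y ^ 2 = t ^ 4 + 294 * t ^ 2 * s ^ 2 - 343 * s ^ 4) :
    ∃ e f : ℤ, IsCoprime f e ∧ e ≠ 0 ∧ e.natAbs ≤ 2 * s.natAbs ∧
      (2 * t) ^ 2 = 4 * f ^ 4 - 147 * f ^ 2 * e ^ 2 + 1372 * e ^ 4 := by
  have hs2 : (0:ℤ) < s ^ 2 := by
    have := abs_pos.mpr hs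
    nlinarith [sq_abs s]
  have hDpos : (0:ℤ) < t ^ 2 + 147 * s ^ 2 := by nlinarith [sq_nonneg t]
  have hDodd : Odd (t ^ 2 + 147 * s ^ 2) := by
    rcases Int.even_or_odd t with ⟨c, hc'⟩ | ⟨c, hc'⟩ <;>
      rcases Int.even_or_odd s with ⟨d, hd'⟩ | ⟨d, hd'⟩
    · exfalso; rcases hpar with ⟨r, hr⟩; omega
    · exact ⟨2 * c ^ 2 + 294 * d ^ 2 + 294 * d + 73, by subst hc' hd'; ring⟩
    · exact ⟨2 * c ^ 2 + 2 * c + 294 * d ^ 2, by subst hc' hd'; ring⟩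
    · exfalso; rcases hpar with ⟨r, hr⟩; omega
  obtain ⟨a, ha⟩ := hDodd
  have hyodd : Odd y := by
    have hy2 : Odd (y ^ 2) := by
      have hsi : y ^ 2 = (2 * a + 1) ^ 2 - 21952 * s ^ 4 := by
        rw [← ha]; linear_combination h
      exact ⟨2 * a ^ 2 + 2 * a - 10976 * s ^ 4, by linear_combination hsi⟩
    rcases Int.odd_pow.mp hy2 with h' | h'
    · exact h'
    · norm_num at h'
  have hNodd : Odd |y| := by
    rcases abs_choice y with h' | h' <;> rw [h']
    · exact hyodd
    · exact hyodd.neg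
  have hN2 : |y| ^ 2 = y ^ 2 := sq_abs y
  obtain ⟨b, hb⟩ := hNodd
  have e1 : (2:ℤ) * (a - b) = (t ^ 2 + 147 * s ^ 2) - |y| := by rw [ha, hb]; ring
  have e2 : (2:ℤ) * (a + b + 1) = (t ^ 2 + 147 * s ^ 2) + |y| := by rw [ha, hb]; ring
  have hgK : (a - b) * (a + b + 1) = 343 * (2 * s) ^ 4 := by
    have h4 : (4:ℤ) * ((a - b) * (a + b + 1)) = 4 * (343 * (2 * s) ^ 4) := by
      calc (4:ℤ) * ((a - b) * (a + b + 1)) = (2 * (a - b)) * (2 * (a + b + 1)) := by ring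
        _ = ((t ^ 2 + 147 * s ^ 2) - |y|) * ((t ^ 2 + 147 * s ^ 2) + |y|) := by rw [e1, e2]
        _ = (t ^ 2 + 147 * s ^ 2) ^ 2 - y ^ 2 := by rw [← hN2]; ring
        _ = 4 * (343 * (2 * s) ^ 4) := by linear_combination -h
    exact mul_left_cancel₀ (by norm_num) h4
  have hprodpos : (0:ℤ) < (a - b) * (a + b + 1) := by rw [hgK]; nlinarith
  have hKpos : (0:ℤ) < a + b + 1 := by
    have hy0 : (0:ℤ) ≤ |y| := abs_nonneg y
    nlinarith
  have hgpos : (0:ℤ) < a - b := by nlinarith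
  have hcop : IsCoprime (a - b) (a + b + 1) := by
    apply isCoprime_of_prime
    intro p hp h1 h2
    have pD : p ∣ t ^ 2 + 147 * s ^ 2 := by
      have hd : p ∣ (a - b) + (a + b + 1) := dvd_add h1 h2
      have : (a - b) + (a + b + 1) = t ^ 2 + 147 * s ^ 2 := by rw [ha]; ring
      rwa [this] at hd
    have pN : p ∣ |y| := by
      have hd : p ∣ (a + b + 1) - (a - b) := dvd_sub h2 h1
      have : (a + b + 1) - (a - b) = |y| := by rw [hb]; ring
      rwa [this] at hd
    have pDodd : Odd (t ^ 2 + 147 * s ^ 2) := ⟨a, ha⟩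
    have p343 : p ∣ 343 * (2 * s) ^ 4 := hgK ▸ dvd_mul_of_dvd_left h1 (a + b + 1)
    rcases hp.2.2 343 ((2 * s) ^ 4) p343 with h7 | hs4
    · have hp7 : p ∣ (7:ℤ) := hp.dvd_of_dvd_pow (n := 3) (by rwa [show ((7:ℤ)^3) = 343 by norm_num])
      have h7D : (7:ℤ) ∣ t ^ 2 + 147 * s ^ 2 := prime_dvd_seven hp hp7 pD
      have h7t : (7:ℤ) ∣ t := by
        refine seven_prime.dvd_of_dvd_pow (n := 2) ?_
        have : (7:ℤ) ∣ t ^ 2 + 147 * s ^ 2 - 147 * s ^ 2 := dvd_sub h7D ⟨21 * s ^ 2, by ring⟩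
        simpa using this
      exact sevenD hc h h7t
    · have hps : p ∣ s := odd_prime_dvd hp pDodd pD (hp.dvd_of_dvd_pow hs4)
      obtain ⟨sc, rfl⟩ := hps
      have hpt : p ∣ t := by
        refine hp.dvd_of_dvd_pow (n := 2) ?_
        have : p ∣ t ^ 2 + 147 * (p * sc) ^ 2 - 147 * (p * sc) ^ 2 :=
          dvd_sub pD ⟨147 * p * sc ^ 2, by ring⟩
        simpa using this
      exact hp.not_unit (hc.isUnit_of_dvd' hpt (Dvd.intro sc rfl))
  obtain ⟨e, f, hef, hefm, hassign⟩ :=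
    split343 (by simpa using hs) hgpos hKpos hcop hgK
  have hD : t ^ 2 + 147 * s ^ 2 = 343 * e ^ 4 + f ^ 4 := by
    rcases hassign with ⟨hg', hK'⟩ | ⟨hg', hK'⟩
    · have : (a - b) + (a + b + 1) = t ^ 2 + 147 * s ^ 2 := by rw [ha]; ring
      rw [← this, hg', hK']
    · have : (a - b) + (a + b + 1) = t ^ 2 + 147 * s ^ 2 := by rw [ha]; ring
      rw [← this, hg', hK']; ring
  have hm2 : (e * f) ^ 2 = 4 * s ^ 2 := by
    rcases hefm with h' | h' <;> rw [h'] <;> ring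
  have hf0 : f ≠ 0 := by
    intro h0
    rcases hefm with h' | h' <;> rw [h0, mul_zero] at h' <;> omega
  have he0 : e ≠ 0 := by
    intro h0
    rcases hefm with h' | h' <;> rw [h0, zero_mul] at h' <;> omega
  refine ⟨e, f, hef.symm, he0, ?_, by linear_combination 4 * hD + 147 * hm2⟩
  have h2s : ((2:ℤ) * s).natAbs = 2 * s.natAbs := by
    rw [Int.natAbs_mul]; rfl
  have h1 : (e * f).natAbs = 2 * s.natAbs := by
    rcases hefm with h' | h' <;> rw [h']
    · exact h2s
    · rw [Int.natAbs_neg]; exact h2s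
  have h2 : e.natAbs ≤ e.natAbs * f.natAbs :=
    Nat.le_mul_of_pos_right _ (Int.natAbs_pos.mpr hf0)
  rw [Int.natAbs_mul] at h1
  omega


/-- positivity of both factors from positive product and nonnegative sum. -/
lemma both_pos {F1 F2 P : ℤ} (hfac : F1 * F2 = P) (hP : 0 < P) (hsum : 0 ≤ F1 + F2) :
    0 < F1 ∧ 0 < F2 := by
  rcases lt_trichotomy F1 0 with hlt | heq | hgt
  · exfalso
    have hF2 : F2 < 0 := by nlinarith
    linarith
  · exfalso; rw [heq, zero_mul] at hfac; omega
  · refine ⟨hgt, ?_⟩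
    nlinarith

lemma odd_of_mul_odd {F1 F2 : ℤ} (h : Odd (F1 * F2)) : Odd F1 ∧ Odd F2 := Int.odd_mul.mp h

/-- the main double descent. -/
theorem mainHG : ∀ n : ℕ,
    (∀ Z v m : ℤ, m.natAbs ≤ n → IsCoprime v m →
      Z ^ 2 = 4 * v ^ 4 - 147 * v ^ 2 * m ^ 2 + 1372 * m ^ 4 → m = 0) ∧
    (∀ Z w m : ℤ, m.natAbs ≤ n → IsCoprime w m →
      Z ^ 2 = w ^ 4 - 147 * w ^ 2 * m ^ 2 + 5488 * m ^ 4 → m = 0) := by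
  intro n
  induction n using Nat.strong_induction_on with
  | _ n IH =>
  have hLH : ∀ Z v m : ℤ, m.natAbs ≤ n → IsCoprime v m →
      Z ^ 2 = 4 * v ^ 4 - 147 * v ^ 2 * m ^ 2 + 1372 * m ^ 4 → m = 0 := by
    intro Z v m hle hc h
    by_cases hm : m = 0
    · exact hm
    rcases Int.even_or_odd m with ⟨m1, hm1⟩ | hmodd
    · -- m even : reduce to the G-form with m1, strictly smaller
      have hm1' : m = 2 * m1 := by omega
      subst hm1'
      have hm1z : m1 ≠ 0 := by simpa using hm
      have hZe : Even Z := by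
        have hZ2 : Even (Z ^ 2) :=
          ⟨2 * v ^ 4 - 294 * v ^ 2 * m1 ^ 2 + 10976 * m1 ^ 4, by linear_combination h⟩
        exact (Int.even_pow.mp hZ2).1
      obtain ⟨Z1, hZ1⟩ := hZe
      have hG : Z1 ^ 2 = v ^ 4 - 147 * v ^ 2 * m1 ^ 2 + 5488 * m1 ^ 4 := by
        have h4 : (4:ℤ) * Z1 ^ 2 = 4 * (v ^ 4 - 147 * v ^ 2 * m1 ^ 2 + 5488 * m1 ^ 4) := by
          rw [hZ1] at h; linear_combination h
        exact mul_left_cancel₀ (by norm_num) h4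
      have hc1 : IsCoprime v m1 := hc.of_mul_right_right
      have hnat : (2 * m1).natAbs = 2 * m1.natAbs := by rw [Int.natAbs_mul]; rfl
      have hlt : m1.natAbs < n := by
        have h1 : 1 ≤ m1.natAbs := Int.natAbs_pos.mpr hm1z
        omega
      have := (IH m1.natAbs hlt).2 Z1 v m1 le_rfl hc1 hG
      exact absurd this hm1z
    · -- m odd : congruence contradictions
      exfalso
      have hN2 : |Z| ^ 2 = Z ^ 2 := sq_abs Z
      have hfac : (4 * |Z| - (8 * v ^ 2 - 147 * m ^ 2)) * (4 * |Z| + (8 * v ^ 2 - 147 * m ^ 2))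
          = 343 * m ^ 4 := by linear_combination 16 * hN2 + 16 * h
      have hm4 : (0:ℤ) < 343 * m ^ 4 := by
        have h3 : (0:ℤ) < m ^ 2 := lt_of_le_of_ne (sq_nonneg m) (Ne.symm (pow_ne_zero 2 hm))
        nlinarith [mul_pos h3 h3]
      obtain ⟨hF1, hF2⟩ := both_pos hfac hm4 (by have := abs_nonneg Z; linarith)
      have hodd343 : Odd (343 * m ^ 4) := Int.odd_mul.mpr ⟨⟨171, by norm_num⟩, hmodd.pow⟩
      obtain ⟨hoddF1, hoddF2⟩ := odd_of_mul_odd (hfac ▸ hodd343)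
      have hcopF : IsCoprime (4 * |Z| - (8 * v ^ 2 - 147 * m ^ 2))
          (4 * |Z| + (8 * v ^ 2 - 147 * m ^ 2)) := by
        apply isCoprime_of_prime
        intro p hp h1 h2
        have pB : p ∣ 8 * v ^ 2 - 147 * m ^ 2 := by
          apply odd_prime_dvd hp hoddF1 h1
          have hd : p ∣ (4 * |Z| + (8 * v ^ 2 - 147 * m ^ 2)) -
              (4 * |Z| - (8 * v ^ 2 - 147 * m ^ 2)) := dvd_sub h2 h1
          have he : (4 * |Z| + (8 * v ^ 2 - 147 * m ^ 2)) -
              (4 * |Z| - (8 * v ^ 2 - 147 * m ^ 2)) = 2 * (2 * (8 * v ^ 2 - 147 * m ^ 2) / 2) := by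
            omega
          rwa [show (4 * |Z| + (8 * v ^ 2 - 147 * m ^ 2)) -
              (4 * |Z| - (8 * v ^ 2 - 147 * m ^ 2)) = 2 * (8 * v ^ 2 - 147 * m ^ 2) by ring] at hd
        have p343 : p ∣ 343 * m ^ 4 := hfac ▸ dvd_mul_of_dvd_left h1 _
        rcases hp.2.2 343 (m ^ 4) p343 with h7 | hm4'
        · have hp7 : p ∣ (7:ℤ) :=
            hp.dvd_of_dvd_pow (n := 3) (by rwa [show ((7:ℤ)^3) = 343 by norm_num])
          have h7B : (7:ℤ) ∣ 8 * v ^ 2 - 147 * m ^ 2 := prime_dvd_seven hp hp7 pB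
          have h7v2 : (7:ℤ) ∣ 8 * v ^ 2 := by
            have := dvd_add h7B (⟨21 * m ^ 2, by ring⟩ : (7:ℤ) ∣ 147 * m ^ 2)
            rwa [show 8 * v ^ 2 - 147 * m ^ 2 + 147 * m ^ 2 = 8 * v ^ 2 by ring] at this
          have h7v : (7:ℤ) ∣ v := by
            rcases seven_prime.2.2 8 (v ^ 2) h7v2 with h8 | hv2
            · exfalso; rcases h8 with ⟨c, hc8⟩; omega
            · exact seven_prime.dvd_of_dvd_pow hv2
          exact sevenH hc h h7v
        · have hpm : p ∣ m := hp.dvd_of_dvd_pow hm4'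
          have pv2 : p ∣ 8 * v ^ 2 := by
            obtain ⟨mc, rfl⟩ := hpm
            have := dvd_add pB (⟨147 * p * mc ^ 2, by ring⟩ : p ∣ 147 * (p * mc) ^ 2)
            rwa [show 8 * v ^ 2 - 147 * (p * mc) ^ 2 + 147 * (p * mc) ^ 2 = 8 * v ^ 2 by ring]
              at this
          have pv : p ∣ v := by
            have s1 : p ∣ 4 * v ^ 2 := odd_prime_dvd hp hoddF1 h1
              (by rwa [show 8 * v ^ 2 = 2 * (4 * v ^ 2) by ring] at pv2)
            have s2 : p ∣ 2 * v ^ 2 := odd_prime_dvd hp hoddF1 h1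
              (by rwa [show 4 * v ^ 2 = 2 * (2 * v ^ 2) by ring] at s1)
            have s3 : p ∣ v ^ 2 := odd_prime_dvd hp hoddF1 h1 s2
            exact hp.dvd_of_dvd_pow s3
          exact hp.not_unit (hc.isUnit_of_dvd' pv hpm)
      obtain ⟨e, f, hef, hefm, hassign⟩ := split343 hm hF1 hF2 hcopF hfac
      have hm2 : (e * f) ^ 2 = m ^ 2 := by
        rcases hefm with h' | h' <;> rw [h'] <;> ring
      rcases hassign with ⟨hg', hK'⟩ | ⟨hg', hK'⟩
      · -- 16v² = f⁴ + 294e²f² − 343e⁴ : contradiction mod 128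
        have he' : Odd e := by
          have : Odd (343 * e ^ 4) := hg' ▸ hoddF1
          rcases Int.odd_pow.mp (Int.odd_mul.mp this).2 with h' | h'
          · exact h'
          · norm_num at h'
        have hf' : Odd f := by
          have : Odd (f ^ 4) := hK' ▸ hoddF2
          rcases Int.odd_pow.mp this with h' | h'
          · exact h'
          · norm_num at h'
        have h16 : 16 * v ^ 2 = f ^ 4 + 294 * e ^ 2 * f ^ 2 - 343 * e ^ 4 := by
          linear_combination hK' - hg' - 294 * hm2
        obtain ⟨k, hk⟩ := rhs128 he' hf'
        exact no16 (by rw [h16, hk])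
      · -- 16v² = 343e⁴ + 294e²f² − f⁴ : contradiction mod 16
        have hf' : Odd f := by
          have : Odd (f ^ 4) := hg' ▸ hoddF1
          rcases Int.odd_pow.mp this with h' | h'
          · exact h'
          · norm_num at h'
        have he' : Odd e := by
          have : Odd (343 * e ^ 4) := hK' ▸ hoddF2
          rcases Int.odd_pow.mp (Int.odd_mul.mp this).2 with h' | h'
          · exact h'
          · norm_num at h'
        have h16 : 16 * v ^ 2 = 343 * e ^ 4 + 294 * e ^ 2 * f ^ 2 - f ^ 4 := by
          linear_combination hK' - hg' - 294 * hm2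
        obtain ⟨k, hk⟩ := rhs16 he' hf'
        have hcomb : 16 * v ^ 2 = 16 * k + 12 := by rw [h16, hk]
        have h12 : (16:ℤ) ∣ 12 := ⟨v ^ 2 - k, by linarith⟩
        norm_num at h12
  refine ⟨hLH, ?_⟩
  intro Z w m hle hc h
  by_cases hm : m = 0
  · exact hm
  rcases Int.even_or_odd m with ⟨m1, hm1⟩ | hmodd
  · -- m even
    have hm1' : m = 2 * m1 := by omega
    subst hm1'
    have hm1z : m1 ≠ 0 := by simpa using hm
    have hwodd : Odd w := by
      rcases Int.even_or_odd w with ⟨c, hc'⟩ | hw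
      · exfalso
        have h2w : (2:ℤ) ∣ w := ⟨c, by omega⟩
        have h2m : (2:ℤ) ∣ 2 * m1 := ⟨m1, rfl⟩
        have hu := hc.isUnit_of_dvd' h2w h2m
        rw [Int.isUnit_iff] at hu
        omega
      · exact hw
    have hZodd : Odd Z := by
      obtain ⟨r, hr⟩ := hwodd.pow (n := 4)
      have hZ2 : Odd (Z ^ 2) :=
        ⟨r - 294 * w ^ 2 * m1 ^ 2 + 43904 * m1 ^ 4, by rw [h, hr]; ring⟩
      rcases Int.odd_pow.mp hZ2 with h' | h'
      · exact h'
      · norm_num at h'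
    have hNodd : Odd |Z| := by
      rcases abs_choice Z with h' | h' <;> rw [h']
      · exact hZodd
      · exact hZodd.neg
    have hN2 : |Z| ^ 2 = Z ^ 2 := sq_abs Z
    have hB1odd : Odd (w ^ 2 - 294 * m1 ^ 2) := by
      obtain ⟨x, hx⟩ := hwodd
      exact ⟨2 * x ^ 2 + 2 * x - 147 * m1 ^ 2, by rw [hx]; ring⟩
    obtain ⟨b, hb⟩ := hNodd
    obtain ⟨a, ha⟩ := hB1odd
    have hgK : (b - a) * (b + a + 1) = 343 * m1 ^ 4 := by
      have h4 : (4:ℤ) * ((b - a) * (b + a + 1)) = 4 * (343 * m1 ^ 4) := by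
        have e1 : (2:ℤ) * (b - a) = |Z| - (w ^ 2 - 294 * m1 ^ 2) := by rw [hb, ha]; ring
        have e2 : (2:ℤ) * (b + a + 1) = |Z| + (w ^ 2 - 294 * m1 ^ 2) := by rw [hb, ha]; ring
        calc (4:ℤ) * ((b - a) * (b + a + 1)) = (2 * (b - a)) * (2 * (b + a + 1)) := by ring
          _ = (|Z| - (w ^ 2 - 294 * m1 ^ 2)) * (|Z| + (w ^ 2 - 294 * m1 ^ 2)) := by rw [e1, e2]
          _ = Z ^ 2 - (w ^ 2 - 294 * m1 ^ 2) ^ 2 := by rw [← hN2]; ring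
          _ = 4 * (343 * m1 ^ 4) := by linear_combination h
      exact mul_left_cancel₀ (by norm_num) h4
    have hm14 : (0:ℤ) < 343 * m1 ^ 4 := by
      have h3 : (0:ℤ) < m1 ^ 2 := lt_of_le_of_ne (sq_nonneg m1) (Ne.symm (pow_ne_zero 2 hm1z))
      nlinarith [mul_pos h3 h3]
    obtain ⟨hgpos, hKpos⟩ := both_pos hgK hm14
      (by have := abs_nonneg Z; omega)
    have hcop : IsCoprime (b - a) (b + a + 1) := by
      apply isCoprime_of_prime
      intro p hp h1 h2
      have pB1 : p ∣ w ^ 2 - 294 * m1 ^ 2 := by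
        have hd : p ∣ (b + a + 1) - (b - a) := dvd_sub h2 h1
        have he : (b + a + 1) - (b - a) = w ^ 2 - 294 * m1 ^ 2 := by omega
        rwa [he] at hd
      have p343 : p ∣ 343 * m1 ^ 4 := hgK ▸ dvd_mul_of_dvd_left h1 _
      rcases hp.2.2 343 (m1 ^ 4) p343 with h7 | hm4'
      · have hp7 : p ∣ (7:ℤ) :=
          hp.dvd_of_dvd_pow (n := 3) (by rwa [show ((7:ℤ)^3) = 343 by norm_num])
        have h7B : (7:ℤ) ∣ w ^ 2 - 294 * m1 ^ 2 := prime_dvd_seven hp hp7 pB1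
        have h7w : (7:ℤ) ∣ w := by
          refine seven_prime.dvd_of_dvd_pow (n := 2) ?_
          have := dvd_add h7B (⟨42 * m1 ^ 2, by ring⟩ : (7:ℤ) ∣ 294 * m1 ^ 2)
          rwa [show w ^ 2 - 294 * m1 ^ 2 + 294 * m1 ^ 2 = w ^ 2 by ring] at this
        exact sevenG hc h h7w
      · have hpm : p ∣ m1 := hp.dvd_of_dvd_pow hm4'
        have pw : p ∣ w := by
          refine hp.dvd_of_dvd_pow (n := 2) ?_
          obtain ⟨mc, rfl⟩ := hpm
          have := dvd_add pB1 (⟨294 * p * mc ^ 2, by ring⟩ : p ∣ 294 * (p * mc) ^ 2)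
          rwa [show w ^ 2 - 294 * (p * mc) ^ 2 + 294 * (p * mc) ^ 2 = w ^ 2 by ring] at this
        have hc1 : IsCoprime w m1 := hc.of_mul_right_right
        exact hp.not_unit (hc1.isUnit_of_dvd' pw hpm)
    obtain ⟨e, f, hef, hefm, hassign⟩ := split343 hm1z hgpos hKpos hcop hgK
    have hm2 : (e * f) ^ 2 = m1 ^ 2 := by
      rcases hefm with h' | h' <;> rw [h'] <;> ring
    have he0 : e ≠ 0 := by
      intro h0
      rcases hefm with h' | h' <;> rw [h0, zero_mul] at h' <;> omega
    have hf0 : f ≠ 0 := by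
      intro h0
      rcases hefm with h' | h' <;> rw [h0, mul_zero] at h' <;> omega
    have hsumodd : Odd (343 * e ^ 4 + f ^ 4) := by
      have : (b - a) + (b + a + 1) = |Z| := by omega
      rcases hassign with ⟨hg', hK'⟩ | ⟨hg', hK'⟩
      · rw [← hg', ← hK', this, hb]; exact ⟨b, rfl⟩
      · rw [show 343 * e ^ 4 + f ^ 4 = f ^ 4 + 343 * e ^ 4 by ring, ← hg', ← hK', this, hb]
        exact ⟨b, rfl⟩
    have hparef : Odd (e + f) := by
      rcases Int.even_or_odd e with ⟨c, hc'⟩ | he' <;>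
        rcases Int.even_or_odd f with ⟨d, hd'⟩ | hf'
      · exfalso
        rcases hsumodd with ⟨r, hr⟩
        rw [hc', hd'] at hr
        have : 343 * (c + c) ^ 4 + (d + d) ^ 4 =
            2 * (2744 * c ^ 4 + 8 * d ^ 4) := by ring
        omega
      · obtain ⟨q, hq⟩ := hf'
        exact ⟨c + q, by omega⟩
      · obtain ⟨q, hq⟩ := he'
        exact ⟨q + d, by omega⟩
      · exfalso
        obtain ⟨q, hq⟩ := he'
        obtain ⟨r, hr⟩ := hf'
        rcases hsumodd with ⟨x, hx⟩
        rw [hq, hr] at hx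
        have h1 : 343 * (2 * q + 1) ^ 4 + (2 * r + 1) ^ 4 =
            2 * (2744 * q ^ 4 + 5488 * q ^ 3 + 4116 * q ^ 2 + 1372 * q +
              8 * r ^ 4 + 16 * r ^ 3 + 12 * r ^ 2 + 4 * r + 172) := by ring
        omega
    rcases hassign with ⟨hg', hK'⟩ | ⟨hg', hK'⟩
    · -- w² = f⁴ + 294e²f² − 343e⁴ : D-form, descend
      have hB1 : w ^ 2 - 294 * m1 ^ 2 = f ^ 4 - 343 * e ^ 4 := by
        have hd : (b + a + 1) - (b - a) = w ^ 2 - 294 * m1 ^ 2 := by omega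
        rw [← hd, hg', hK']
      have hDeq : w ^ 2 = f ^ 4 + 294 * f ^ 2 * e ^ 2 - 343 * e ^ 4 := by
        linear_combination hB1 - 294 * hm2
      have hcopfe : IsCoprime f e := by
        have h6 : IsCoprime (343 * e ^ 4) (f ^ 4) := by rw [← hg', ← hK']; exact hcop
        have h7 : IsCoprime (e ^ 4) (f ^ 4) := h6.of_isCoprime_of_dvd_left ⟨343, by ring⟩
        exact ((IsCoprime.pow_left_iff (by norm_num)).mp
          ((IsCoprime.pow_right_iff (by norm_num)).mp h7)).symm
      have hparfe : Odd (f + e) := by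
        rcases hparef with ⟨x, hx⟩; exact ⟨x, by omega⟩
      obtain ⟨e', f', hcop', he'0, hbound, heq⟩ := descD hcopfe hparfe he0 hDeq
      have hsize : e'.natAbs ≤ n := by
        have hm1n : m1.natAbs = e.natAbs * f.natAbs := by
          rcases hefm with h' | h'
          · rw [← h', Int.natAbs_mul]
          · rw [show m1 = -(e * f) by linarith, Int.natAbs_neg, Int.natAbs_mul]
        have h2 : e.natAbs ≤ e.natAbs * f.natAbs :=
          Nat.le_mul_of_pos_right _ (Int.natAbs_pos.mpr hf0)
        have h4 : e.natAbs ≤ m1.natAbs := hm1n ▸ h2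
        have h3 : (2 * m1).natAbs = 2 * m1.natAbs := by rw [Int.natAbs_mul]; rfl
        omega
      exact absurd (hLH (2 * f) f' e' hsize hcop' heq) he'0
    · -- w² = 343e⁴ + 294e²f² − f⁴ : contradiction mod 8
      have hB1 : w ^ 2 - 294 * m1 ^ 2 = 343 * e ^ 4 - f ^ 4 := by
        have hd : (b + a + 1) - (b - a) = w ^ 2 - 294 * m1 ^ 2 := by omega
        rw [← hd, hg', hK']
      have hDeq : w ^ 2 = 343 * e ^ 4 + 294 * e ^ 2 * f ^ 2 - f ^ 4 := by
        linear_combination hB1 - 294 * hm2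
      obtain ⟨k, hk⟩ := c5 hparef
      exact absurd (by rw [hDeq, hk]) (fun h' => no8 h')
  · -- m odd : congruence contradictions for the G-form
    exfalso
    have hN2 : |Z| ^ 2 = Z ^ 2 := sq_abs Z
    have hfac : (2 * |Z| - (2 * w ^ 2 - 147 * m ^ 2)) * (2 * |Z| + (2 * w ^ 2 - 147 * m ^ 2))
        = 343 * m ^ 4 := by linear_combination 4 * hN2 + 4 * h
    have hm4 : (0:ℤ) < 343 * m ^ 4 := by
      have h3 : (0:ℤ) < m ^ 2 := lt_of_le_of_ne (sq_nonneg m) (Ne.symm (pow_ne_zero 2 hm))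
      nlinarith [mul_pos h3 h3]
    obtain ⟨hF1, hF2⟩ := both_pos hfac hm4 (by have := abs_nonneg Z; linarith)
    have hodd343 : Odd (343 * m ^ 4) := Int.odd_mul.mpr ⟨⟨171, by norm_num⟩, hmodd.pow⟩
    obtain ⟨hoddF1, hoddF2⟩ := odd_of_mul_odd (hfac ▸ hodd343)
    have hcopF : IsCoprime (2 * |Z| - (2 * w ^ 2 - 147 * m ^ 2))
        (2 * |Z| + (2 * w ^ 2 - 147 * m ^ 2)) := by
      apply isCoprime_of_prime
      intro p hp h1 h2
      have pB : p ∣ 2 * w ^ 2 - 147 * m ^ 2 := by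
        apply odd_prime_dvd hp hoddF1 h1
        have hd : p ∣ (2 * |Z| + (2 * w ^ 2 - 147 * m ^ 2)) -
            (2 * |Z| - (2 * w ^ 2 - 147 * m ^ 2)) := dvd_sub h2 h1
        rwa [show (2 * |Z| + (2 * w ^ 2 - 147 * m ^ 2)) -
            (2 * |Z| - (2 * w ^ 2 - 147 * m ^ 2)) = 2 * (2 * w ^ 2 - 147 * m ^ 2) by ring] at hd
      have p343 : p ∣ 343 * m ^ 4 := hfac ▸ dvd_mul_of_dvd_left h1 _
      rcases hp.2.2 343 (m ^ 4) p343 with h7 | hm4'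
      · have hp7 : p ∣ (7:ℤ) :=
          hp.dvd_of_dvd_pow (n := 3) (by rwa [show ((7:ℤ)^3) = 343 by norm_num])
        have h7B : (7:ℤ) ∣ 2 * w ^ 2 - 147 * m ^ 2 := prime_dvd_seven hp hp7 pB
        have h7w2 : (7:ℤ) ∣ 2 * w ^ 2 := by
          have := dvd_add h7B (⟨21 * m ^ 2, by ring⟩ : (7:ℤ) ∣ 147 * m ^ 2)
          rwa [show 2 * w ^ 2 - 147 * m ^ 2 + 147 * m ^ 2 = 2 * w ^ 2 by ring] at this
        have h7w : (7:ℤ) ∣ w := by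
          rcases seven_prime.2.2 2 (w ^ 2) h7w2 with h8 | hw2
          · exfalso; rcases h8 with ⟨c, hc8⟩; omega
          · exact seven_prime.dvd_of_dvd_pow hw2
        exact sevenG hc h h7w
      · have hpm : p ∣ m := hp.dvd_of_dvd_pow hm4'
        have pw2 : p ∣ 2 * w ^ 2 := by
          obtain ⟨mc, rfl⟩ := hpm
          have := dvd_add pB (⟨147 * p * mc ^ 2, by ring⟩ : p ∣ 147 * (p * mc) ^ 2)
          rwa [show 2 * w ^ 2 - 147 * (p * mc) ^ 2 + 147 * (p * mc) ^ 2 = 2 * w ^ 2 by ring]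
            at this
        have pw : p ∣ w := by
          have s3 : p ∣ w ^ 2 := odd_prime_dvd hp hoddF1 h1 pw2
          exact hp.dvd_of_dvd_pow s3
        exact hp.not_unit (hc.isUnit_of_dvd' pw hpm)
    obtain ⟨e, f, hef, hefm, hassign⟩ := split343 hm hF1 hF2 hcopF hfac
    have hm2 : (e * f) ^ 2 = m ^ 2 := by
      rcases hefm with h' | h' <;> rw [h'] <;> ring
    rcases hassign with ⟨hg', hK'⟩ | ⟨hg', hK'⟩
    · have he' : Odd e := by
        have : Odd (343 * e ^ 4) := hg' ▸ hoddF1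
        rcases Int.odd_pow.mp (Int.odd_mul.mp this).2 with h' | h'
        · exact h'
        · norm_num at h'
      have hf' : Odd f := by
        have : Odd (f ^ 4) := hK' ▸ hoddF2
        rcases Int.odd_pow.mp this with h' | h'
        · exact h'
        · norm_num at h'
      have h4w : 4 * w ^ 2 = f ^ 4 + 294 * e ^ 2 * f ^ 2 - 343 * e ^ 4 := by
        linear_combination hK' - hg' - 294 * hm2
      obtain ⟨k, hk⟩ := rhs128 he' hf'
      exact no4 (by rw [h4w, hk])
    · have hf' : Odd f := by
        have : Odd (f ^ 4) := hg' ▸ hoddF1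
        rcases Int.odd_pow.mp this with h' | h'
        · exact h'
        · norm_num at h'
      have he' : Odd e := by
        have : Odd (343 * e ^ 4) := hK' ▸ hoddF2
        rcases Int.odd_pow.mp (Int.odd_mul.mp this).2 with h' | h'
        · exact h'
        · norm_num at h'
      have h4w : 4 * w ^ 2 = 343 * e ^ 4 + 294 * e ^ 2 * f ^ 2 - f ^ 4 := by
        linear_combination hK' - hg' - 294 * hm2
      obtain ⟨k, hk⟩ := rhs16 he' hf'
      exact no4b (by rw [h4w, hk])


/-- The integer form: coprime `a, b` with `b > 0` and `7Z² = F(a,b)` force `(a,b) = (-1,3)`. -/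
lemma integer_points {a b Z : ℤ} (hb : 0 < b) (hc : IsCoprime a b)
    (h : 7 * Z ^ 2 = 16 * a ^ 4 + 68 * a ^ 3 * b + 111 * a ^ 2 * b ^ 2 + 62 * a * b ^ 3 +
      11 * b ^ 4) : a = -1 ∧ b = 3 := by
  have hF : 7 * Z ^ 2 = 28 * (2 * a + b) ^ 4 - 21 * (2 * a + b) ^ 2 * (3 * a + b) ^ 2 +
      4 * (3 * a + b) ^ 4 := by linear_combination h
  have hcuv : IsCoprime (2 * a + b) (3 * a + b) := by
    obtain ⟨c, d, hcd⟩ := hc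
    exact ⟨3 * d - c, c - 2 * d, by linear_combination hcd⟩
  have h7v : (7:ℤ) ∣ (3 * a + b) := by
    have h7 : (7:ℤ) ∣ 4 * (3 * a + b) ^ 4 :=
      ⟨Z ^ 2 - 4 * (2 * a + b) ^ 4 + 3 * (2 * a + b) ^ 2 * (3 * a + b) ^ 2, by
        linear_combination -hF⟩
    rcases seven_prime.2.2 4 ((3 * a + b) ^ 4) h7 with h' | h'
    · exfalso; rcases h' with ⟨c, hc'⟩; omega
    · exact seven_prime.dvd_of_dvd_pow h'
  obtain ⟨v1, hv1⟩ := h7v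
  have hH : Z ^ 2 = 4 * (2 * a + b) ^ 4 - 147 * (2 * a + b) ^ 2 * v1 ^ 2 + 1372 * v1 ^ 4 := by
    have h7' : (7:ℤ) * Z ^ 2 =
        7 * (4 * (2 * a + b) ^ 4 - 147 * (2 * a + b) ^ 2 * v1 ^ 2 + 1372 * v1 ^ 4) := by
      rw [hv1] at hF; linear_combination hF
    exact mul_left_cancel₀ (by norm_num) h7'
  have hcuv1 : IsCoprime (2 * a + b) v1 := by
    rw [hv1] at hcuv
    exact hcuv.of_mul_right_right
  have hv10 : v1 = 0 :=
    (mainHG v1.natAbs).1 Z (2 * a + b) v1 le_rfl hcuv1 hH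
  have hv0 : 3 * a + b = 0 := by rw [hv1, hv10, mul_zero]
  have hba : b = -3 * a := by linarith
  have hUnit : IsUnit a := hc.isUnit_of_dvd' dvd_rfl ⟨-3, by linarith⟩
  rw [Int.isUnit_iff] at hUnit
  rcases hUnit with h1 | h1
  · exfalso; rw [h1] at hba; omega
  · exact ⟨h1, by rw [h1] at hba; omega⟩

end Xe7

/-- The only rational points of (the smooth projective model of) the genus-1 curve
`y² = 7(16x⁴ + 68x³ + 111x² + 62x + 11)` are `(−1/3, 14/9)` and `(−1/3, −14/9)`.  (The two
points at infinity of the smooth projective model are defined over `ℚ(√7)` and are not rational,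
so the rational points are exactly the affine solutions.) -/
theorem Xe7_rational_points :
    {P : ℚ × ℚ | P.2 ^ 2 =
        7 * (16 * P.1 ^ 4 + 68 * P.1 ^ 3 + 111 * P.1 ^ 2 + 62 * P.1 + 11)} =
      {(-1/3, 14/9), (-1/3, -14/9)} := by
  ext ⟨x, y⟩
  simp only [Set.mem_setOf_eq, Set.mem_insert_iff, Set.mem_singleton_iff, Prod.mk.injEq]
  constructor
  · intro h
    have hb0 : (0:ℤ) < (x.den : ℤ) := by exact_mod_cast x.pos
    have hdQ : ((x.den : ℚ)) ≠ 0 := by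
      exact_mod_cast x.den_nz
    have hx : (x.num : ℚ) = x * (x.den : ℚ) := by
      have h' := Rat.num_div_den x
      rw [div_eq_iff hdQ] at h'
      rw [h']
    have key : (y * (x.den : ℚ) ^ 2) ^ 2 =
        ((7 * (16 * x.num ^ 4 + 68 * x.num ^ 3 * (x.den : ℤ) + 111 * x.num ^ 2 * (x.den : ℤ) ^ 2 +
          62 * x.num * (x.den : ℤ) ^ 3 + 11 * (x.den : ℤ) ^ 4) : ℤ) : ℚ) := by
      push_cast
      rw [hx]
      linear_combination ((x.den : ℚ)) ^ 4 * h
    have hden : ((y * (x.den : ℚ) ^ 2) ^ 2).den = 1 := by rw [key]; exact Rat.den_intCast _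
    have hYden : (y * (x.den : ℚ) ^ 2).den = 1 := by
      rw [pow_two, Rat.mul_self_den] at hden
      exact Nat.eq_one_of_mul_eq_one_right hden
    obtain ⟨nY, hnY⟩ : ∃ n : ℤ, (n : ℚ) = y * (x.den : ℚ) ^ 2 :=
      ⟨(y * (x.den : ℚ) ^ 2).num, (Rat.den_eq_one_iff _).mp hYden⟩
    have hint : nY ^ 2 = 7 * (16 * x.num ^ 4 + 68 * x.num ^ 3 * (x.den : ℤ) +
        111 * x.num ^ 2 * (x.den : ℤ) ^ 2 + 62 * x.num * (x.den : ℤ) ^ 3 +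
        11 * (x.den : ℤ) ^ 4) := by
      have hcast : ((nY ^ 2 : ℤ) : ℚ) = ((7 * (16 * x.num ^ 4 + 68 * x.num ^ 3 * (x.den : ℤ) +
          111 * x.num ^ 2 * (x.den : ℤ) ^ 2 + 62 * x.num * (x.den : ℤ) ^ 3 +
          11 * (x.den : ℤ) ^ 4) : ℤ) : ℚ) := by
        push_cast
        push_cast at key
        rw [hnY]
        exact key
      exact_mod_cast hcast
    have h7n : (7:ℤ) ∣ nY := by
      refine Xe7.seven_prime.dvd_of_dvd_pow (n := 2) ?_
      exact ⟨_, hint⟩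
    obtain ⟨Z, hZ⟩ := h7n
    have hZeq : 7 * Z ^ 2 = 16 * x.num ^ 4 + 68 * x.num ^ 3 * (x.den : ℤ) +
        111 * x.num ^ 2 * (x.den : ℤ) ^ 2 + 62 * x.num * (x.den : ℤ) ^ 3 +
        11 * (x.den : ℤ) ^ 4 := by
      rw [hZ] at hint
      have h7' : (7:ℤ) * (7 * Z ^ 2) = 7 * (16 * x.num ^ 4 + 68 * x.num ^ 3 * (x.den : ℤ) +
          111 * x.num ^ 2 * (x.den : ℤ) ^ 2 + 62 * x.num * (x.den : ℤ) ^ 3 +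
          11 * (x.den : ℤ) ^ 4) := by linear_combination hint
      exact mul_left_cancel₀ (by norm_num) h7'
    have hcop : IsCoprime x.num ((x.den : ℤ)) := by
      rw [Int.isCoprime_iff_gcd_eq_one]
      simpa [Int.gcd] using x.reduced
    obtain ⟨ha, hb⟩ := Xe7.integer_points hb0 hcop hZeq
    have hden3 : x.den = 3 := by exact_mod_cast hb
    have hxval : x = -1/3 := by
      rw [← Rat.num_div_den x, ha, hden3]
      norm_num
    rw [hxval] at h
    have hy2 : (y - 14/9) * (y + 14/9) = 0 := by
      have : y ^ 2 = (14/9 : ℚ) ^ 2 := by rw [h]; norm_num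
      linear_combination this
    rcases mul_eq_zero.mp hy2 with h' | h'
    · exact Or.inl ⟨hxval, by linarith⟩
    · exact Or.inr ⟨hxval, by linarith⟩
  · rintro (⟨rfl, rfl⟩ | ⟨rfl, rfl⟩) <;> norm_num
end
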